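/- arXiv:2308.13967 — 5 statements merged into one kernel-verified Lean document; each statement's English description precedes it below -/
import Mathlib

section
/- A shift space X ⊆ 𝒜^∞ is d̄_M-stable if and only if its measure center X^+ is d̄_M-stable. -/
open MeasureTheory Filter Topology

namespace DbarPaper

variable {A : Type} [Fintype A] [DecidableEq A] [Inhabited A]
  [TopologicalSpace A] [DiscreteTopology A]
  [MeasurableSpace A] [MeasurableSingletonClass A]

/-- The shift map on the full shift `𝒜^∞ = ℕ → A`. -/
def shift : (ℕ → A) → (ℕ → A) := fun x n => x (n + 1)

/-- A shift space: a nonempty, closed, shift-invariant subset of the full shift. -/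
def ShiftSpace (X : Set (ℕ → A)) : Prop :=
  X.Nonempty ∧ IsClosed X ∧ ∀ x ∈ X, shift x ∈ X

/-- The word `w` appears in the sequence `x`. -/
def occursIn (w : List A) (x : ℕ → A) : Prop :=
  ∃ i : ℕ, w = List.ofFn (fun k : Fin w.length => x (i + (k : ℕ)))

/-- The language of a set `X`: all finite words appearing in points of `X`. -/
def lang (X : Set (ℕ → A)) : Set (List A) := {w | ∃ x ∈ X, occursIn w x}

/-- Words of length `n` in the language of `X`. -/
def langN (n : ℕ) (X : Set (ℕ → A)) : Set (List A) := {w | w ∈ lang X ∧ w.length = n}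

/-- The pseudometric `d̄` on the full shift. -/
noncomputable def dbar (x y : ℕ → A) : ℝ :=
  Filter.limsup
    (fun n => (((Finset.range n).filter (fun j => x j ≠ y j)).card : ℝ) / (n : ℝ))
    Filter.atTop

/-- Hausdorff "distance" between two sets induced by a `ℝ`-valued distance. -/
noncomputable def hausdist {Z : Type*} (d : Z → Z → ℝ) (P Q : Set Z) : ℝ :=
  max (⨆ p : P, ⨅ q : Q, d p q) (⨆ q : Q, ⨅ p : P, d p q)

/-- A probability measure is shift-invariant. -/
def invariantPM (μ : ProbabilityMeasure (ℕ → A)) : Prop :=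
  (μ : Measure (ℕ → A)).map shift = (μ : Measure (ℕ → A))

/-- `M_σ(X)`: shift-invariant Borel probability measures giving `X` full measure. -/
def Msigma (X : Set (ℕ → A)) : Set (ProbabilityMeasure (ℕ → A)) :=
  {μ | invariantPM μ ∧ μ X = 1}

/-- `ξ` is a joining of `μ` and `ν`: a `σ×σ`-invariant measure on the product with
marginals `μ` and `ν`. -/
def IsJoining (ξ : Measure ((ℕ → A) × (ℕ → A))) (μ ν : ProbabilityMeasure (ℕ → A)) : Prop :=
  ξ.map (Prod.map shift shift) = ξ ∧
  ξ.map Prod.fst = (μ : Measure (ℕ → A)) ∧ ξ.map Prod.snd = (ν : Measure (ℕ → A))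

/-- Ornstein's metric `d̄_M` on invariant measures. -/
noncomputable def dbarM (μ ν : ProbabilityMeasure (ℕ → A)) : ℝ :=
  sInf {r : ℝ | ∃ ξ : Measure ((ℕ → A) × (ℕ → A)),
    IsJoining ξ μ ν ∧ r = (ξ {p | p.1 0 ≠ p.2 0}).toReal}

/-- `d̄_M`-stability of a shift space (Austin). -/
def DbarMStable (X : Set (ℕ → A)) : Prop :=
  ∀ ε : ℝ, 0 < ε → ∃ U : Set (ProbabilityMeasure (ℕ → A)), IsOpen U ∧ Msigma X ⊆ U ∧
    ∀ ν ∈ U, invariantPM ν → ∃ μ ∈ Msigma X, dbarM μ ν < ε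

/-- The infinite concatenation of a sequence of (nonempty) words. -/
def concatSeq (w : ℕ → List A) : ℕ → A := fun n =>
  ((List.ofFn (fun i : Fin (n + 1) => w (i : ℕ))).flatten).getD n default

/-- The `d̄`-shadowing property. -/
def DbarShadowing (X : Set (ℕ → A)) : Prop :=
  ∀ ε : ℝ, 0 < ε → ∃ N : ℕ, 0 < N ∧ ∀ w : ℕ → List A,
    (∀ j, w j ∈ lang X) → (∀ j, N ≤ (w j).length) →
    ∃ x' ∈ X, dbar (concatSeq w) x' < ε

/-- `U_n(X)`: the union of cylinders of words of length `n` in the language of `X`. -/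
def cylNbhd (X : Set (ℕ → A)) (n : ℕ) : Set (ℕ → A) :=
  {x | List.ofFn (fun k : Fin n => x (k : ℕ)) ∈ lang X}

/-- The `n`-th (topological) Markov approximation of `X`: all sequences whose subwords of
length `n+1` belong to the language of `X`. -/
def markovApprox (X : Set (ℕ → A)) (n : ℕ) : Set (ℕ → A) :=
  {x | ∀ i : ℕ, List.ofFn (fun k : Fin (n + 1) => x (i + (k : ℕ))) ∈ lang X}

/-- Transitivity, in terms of the language. -/
def TransitiveShift (X : Set (ℕ → A)) : Prop :=
  ∀ u ∈ lang X, ∀ w ∈ lang X, ∃ v : List A, u ++ v ++ w ∈ lang X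

/-- Topological mixing, in terms of the language. -/
def MixingShift (X : Set (ℕ → A)) : Prop :=
  ∀ u ∈ lang X, ∀ w ∈ lang X, ∃ N : ℕ, ∀ m : ℕ, N ≤ m →
    ∃ v : List A, v.length = m ∧ u ++ v ++ w ∈ lang X

/-- Chain mixing: all but finitely many Markov approximations are topologically mixing. -/
def ChainMixing (X : Set (ℕ → A)) : Prop :=
  ∃ N : ℕ, ∀ n : ℕ, N ≤ n → MixingShift (markovApprox X n)

/-- `C` is the measure center of `X`: the smallest shift space contained in `X` of full
measure for every invariant measure of `X`. -/
def IsMeasureCenter (X C : Set (ℕ → A)) : Prop :=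
  ShiftSpace C ∧ C ⊆ X ∧ (∀ μ ∈ Msigma X, μ C = 1) ∧
  ∀ Y : Set (ℕ → A), ShiftSpace Y → Y ⊆ X → (∀ μ ∈ Msigma X, μ Y = 1) → C ⊆ Y

/-- Measure of the cylinder determined by a word of length `n`. -/
noncomputable def cylMeasure (μ : ProbabilityMeasure (ℕ → A)) {n : ℕ} (w : Fin n → A) : ℝ :=
  ((μ : Measure (ℕ → A)) {x | ∀ k : Fin n, x (k : ℕ) = w k}).toReal

/-- Entropy of the partition into cylinders of length `n`. -/
noncomputable def blockEntropy (μ : ProbabilityMeasure (ℕ → A)) (n : ℕ) : ℝ :=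
  -∑ w : Fin n → A, cylMeasure μ w * Real.log (cylMeasure μ w)

/-- Kolmogorov–Sinai entropy of a shift-invariant measure. -/
noncomputable def ksEntropy (μ : ProbabilityMeasure (ℕ → A)) : ℝ :=
  Filter.limsup (fun n => blockEntropy μ n / (n : ℝ)) Filter.atTop

/-- `μ` is ergodic for the shift. -/
def ErgodicPM (μ : ProbabilityMeasure (ℕ → A)) : Prop :=
  Ergodic shift (μ : Measure (ℕ → A))

/-- Ergodic measures are entropy dense in `M_σ(X)`. -/
def EntropyDense (X : Set (ℕ → A)) : Prop :=
  ∀ μ ∈ Msigma X, ∀ U : Set (ProbabilityMeasure (ℕ → A)), IsOpen U → μ ∈ U →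
    ∀ ε : ℝ, 0 < ε →
      ∃ ν ∈ Msigma X, ν ∈ U ∧ ErgodicPM ν ∧ |ksEntropy ν - ksEntropy μ| < ε

/-- Topological entropy of a shift space. -/
noncomputable def topEntropy (X : Set (ℕ → A)) : ℝ :=
  Filter.limsup (fun n => Real.log (Nat.card ↥(langN n X)) / (n : ℝ)) Filter.atTop

/-- The standard metric on the full shift. -/
noncomputable def rho (x y : ℕ → A) : ℝ :=
  open scoped Classical in
  if x = y then 0 else (2 : ℝ) ^ (-((sInf {j : ℕ | x j ≠ y j} : ℕ) : ℤ))

/-- Proximality of a shift space. -/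
def ProximalShift (X : Set (ℕ → A)) : Prop :=
  ∀ x ∈ X, ∀ y ∈ X,
    Filter.liminf (fun n => rho (shift^[n] x) (shift^[n] y)) Filter.atTop = 0

/-- Minimality of a shift space. -/
def MinimalShift (X : Set (ℕ → A)) : Prop :=
  ShiftSpace X ∧ ∀ Y : Set (ℕ → A), ShiftSpace Y → Y ⊆ X → Y = X

/-- An `A`-labeled directed multigraph on vertices `V` with edges `E`. -/
structure LabeledGraph (A V E : Type*) where
  src : E → V
  dst : E → V
  lab : E → A

namespace LabeledGraph

variable {A' V E : Type*}

/-- `es` is a path in `G` from `u` to `v`. -/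
def PathFromTo (G : LabeledGraph A' V E) (es : List E) (u v : V) : Prop :=
  es.Chain' (fun e f => G.dst e = G.src f) ∧
  es.head?.map G.src = some u ∧ es.getLast?.map G.dst = some v

/-- `G` is strongly connected. -/
def StronglyConnected (G : LabeledGraph A' V E) : Prop :=
  ∀ u v : V, ∃ es : List E, G.PathFromTo es u v

/-- `d` is the period of `G`: the gcd of lengths of closed paths. -/
def HasPeriod (G : LabeledGraph A' V E) (d : ℕ) : Prop :=
  (∀ (es : List E) (u : V), G.PathFromTo es u u → d ∣ es.length) ∧
  ∀ d' : ℕ, (∀ (es : List E) (u : V), G.PathFromTo es u u → d' ∣ es.length) → d' ∣ d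

/-- `b` is a safe symbol for `G`. -/
def SafeSymbol (G : LabeledGraph A' V E) (b : A') : Prop :=
  ∀ e : E, ∃ e' : E, G.src e' = G.src e ∧ G.dst e' = G.dst e ∧ G.lab e' = b

/-- The shift space presented by the labeled graph `G`: labels read along infinite paths. -/
def presents (G : LabeledGraph A' V E) : Set (ℕ → A') :=
  {x | ∃ e : ℕ → E, (∀ j, G.dst (e j) = G.src (e (j + 1))) ∧ ∀ j, x j = G.lab (e j)}

end LabeledGraph

/-- The coupling of a family of labeled graphs: an edge labeled `a` from `v` to `v'` exists
iff each `G k` has an edge from `v k` to `v' k` labeled `a`. -/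
def coupling {A' : Type*} {n : ℕ} {V E : Fin n → Type*}
    (G : ∀ k, LabeledGraph A' (V k) (E k)) :
    LabeledGraph A' (∀ k, V k) {p : (∀ k, E k) × A' // ∀ k, (G k).lab (p.1 k) = p.2} where
  src p := fun k => (G k).src (p.1.1 k)
  dst p := fun k => (G k).dst (p.1.1 k)
  lab p := p.1.2

/-- Sofic shift spaces: those presented by some finite labeled graph. -/
def Sofic (X : Set (ℕ → A)) : Prop :=
  ∃ (V E : Type) (_ : Fintype V) (_ : Fintype E) (G : LabeledGraph A V E),
    X = G.presents

/-- The coded shift generated by a finite set of words `B`: the closure of the set of all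
shifts of infinite concatenations of words from `B`. -/
def codedShift (B : Finset (List A)) : Set (ℕ → A) :=
  closure {x | ∃ (b : ℕ → List A) (k : ℕ), (∀ i, b i ∈ B) ∧ x = shift^[k] (concatSeq b)}


/-- `X` is `d̄_M`-stable iff its measure center is. -/
theorem statement3 (hA : 2 ≤ Fintype.card A) (X C : Set (ℕ → A)) (hX : ShiftSpace X)
    (hC : IsMeasureCenter X C) :
    DbarMStable X ↔ DbarMStable C := by
  have hM : Msigma X = Msigma C := by
    ext μ
    constructor
    · rintro ⟨hinv, hXμ⟩
      exact ⟨hinv, hC.2.2.1 μ ⟨hinv, hXμ⟩⟩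
    · rintro ⟨hinv, hCμ⟩
      refine ⟨hinv, le_antisymm (μ.apply_le_one X) ?_⟩
      calc (1 : NNReal) = μ C := hCμ.symm
        _ ≤ μ X := μ.apply_mono hC.2.1
  unfold DbarMStable
  rw [hM]

end DbarPaper
end

section
/- Let G_k = (V_k, E_k, τ_k) for 1 ≤ k ≤ n be strongly connected 𝒜-labeled directed multigraphs which have a common safe symbol and pairwise coprime periods. Then their coupling G is strongly connected. -/
open MeasureTheory Filter Topology

namespace DbarPaper

variable {A : Type} [Fintype A] [DecidableEq A] [Inhabited A]
  [TopologicalSpace A] [DiscreteTopology A]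
  [MeasurableSpace A] [MeasurableSingletonClass A]

namespace LabeledGraph

variable {A' V E : Type*}

def HasPathLen (G : LabeledGraph A' V E) (u v : V) (ℓ : ℕ) : Prop :=
  0 < ℓ ∧ ∃ e : ℕ → E, G.src (e 0) = u ∧ G.dst (e (ℓ - 1)) = v ∧
    ∀ j, j + 1 < ℓ → G.dst (e j) = G.src (e (j + 1))

lemma hasPathLen_of_pathFromTo {G : LabeledGraph A' V E} {es : List E} {u v : V}
    (h : G.PathFromTo es u v) : G.HasPathLen u v es.length := by
  obtain ⟨hc, hh, hl⟩ := h
  have hne : es ≠ [] := by rintro rfl; simp at hh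
  have hlen : 0 < es.length := List.length_pos_iff.mpr hne
  refine ⟨hlen, fun j => es.getD j (es.head hne), ?_, ?_, ?_⟩
  · rw [List.head?_eq_head hne] at hh
    simp only [Option.map_some, Option.some.injEq] at hh
    show G.src (es.getD 0 (es.head hne)) = u
    rw [List.getD_eq_getElem _ _ hlen]
    rw [← hh, List.getElem_zero]
  · rw [List.getLast?_eq_getLast hne] at hl
    simp only [Option.map_some, Option.some.injEq] at hl
    show G.dst (es.getD (es.length - 1) (es.head hne)) = v
    rw [List.getD_eq_getElem _ _ (by omega)]
    rw [← hl, List.getLast_eq_getElem]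
  · intro j hj
    show G.dst (es.getD j (es.head hne)) = G.src (es.getD (j + 1) (es.head hne))
    rw [List.getD_eq_getElem _ _ (by omega), List.getD_eq_getElem _ _ (by omega)]
    have := List.isChain_iff_getElem.mp hc j (by omega)
    simpa using this

lemma pathFromTo_of_hasPathLen {G : LabeledGraph A' V E} {u v : V} {ℓ : ℕ}
    (h : G.HasPathLen u v ℓ) : ∃ es : List E, es.length = ℓ ∧ G.PathFromTo es u v := by
  obtain ⟨hl, e, h0, h1, hch⟩ := h
  refine ⟨List.ofFn (fun i : Fin ℓ => e i), by simp, ?_, ?_, ?_⟩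
  · refine List.isChain_iff_getElem.mpr ?_
    intro i hi
    simp only [List.length_ofFn] at hi
    simp only [List.get_eq_getElem, List.getElem_ofFn]
    exact hch i (by omega)
  · have h01 : 0 < (List.ofFn (fun i : Fin ℓ => e i)).length := by simpa
    rw [List.head?_eq_head (List.ne_nil_of_length_pos h01)]
    simp only [Option.map_some, Option.some.injEq]
    rw [← List.getElem_zero h01]
    simp [List.getElem_ofFn, h0]
  · have h01 : 0 < (List.ofFn (fun i : Fin ℓ => e i)).length := by simpa
    have hne := List.ne_nil_of_length_pos h01
    rw [List.getLast?_eq_getLast hne]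
    simp only [Option.map_some, Option.some.injEq]
    rw [List.getLast_eq_getElem]
    simp [List.getElem_ofFn, h1]

lemma hasPathLen_trans {G : LabeledGraph A' V E} {u v w : V} {ℓ m : ℕ}
    (h1 : G.HasPathLen u v ℓ) (h2 : G.HasPathLen v w m) : G.HasPathLen u w (ℓ + m) := by
  obtain ⟨hl1, e1, ha1, hb1, hc1⟩ := h1
  obtain ⟨hl2, e2, ha2, hb2, hc2⟩ := h2
  refine ⟨by omega, fun j => if j < ℓ then e1 j else e2 (j - ℓ), ?_, ?_, ?_⟩
  · simp [hl1, ha1]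
  · have : ¬ (ℓ + m - 1 < ℓ) := by omega
    simp only [this, if_false]
    have : ℓ + m - 1 - ℓ = m - 1 := by omega
    rw [this, hb2]
  · intro j hj
    by_cases hjl : j + 1 < ℓ
    · simp only [show j < ℓ by omega, if_true, hjl, if_true]
      exact hc1 j hjl
    · by_cases hje : j + 1 = ℓ
      · simp only [show j < ℓ by omega, if_true, show ¬ (j+1 < ℓ) by omega, if_false]
        have h0 : j + 1 - ℓ = 0 := by omega
        have hj1 : j = ℓ - 1 := by omega
        rw [h0, ha2, hj1, hb1]
      · simp only [show ¬ (j < ℓ) by omega, if_false, show ¬ (j+1 < ℓ) by omega, if_false]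
        have : j + 1 - ℓ = (j - ℓ) + 1 := by omega
        rw [this]
        exact hc2 (j - ℓ) (by omega)

end LabeledGraph

lemma nsmul_mem {S : Set ℕ} (hadd : ∀ x ∈ S, ∀ y ∈ S, x + y ∈ S) {x : ℕ} (hx : x ∈ S) :
    ∀ k, 1 ≤ k → k * x ∈ S := by
  intro k
  induction k with
  | zero => intro h; omega
  | succ k ih =>
    intro _
    rcases Nat.eq_zero_or_pos k with h | h
    · subst h; simpa using hx
    · have h2 := hadd _ (ih h) _ hx
      have e : (k + 1) * x = k * x + x := by ring
      rwa [e]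

lemma eventually_mul_mem {S : Set ℕ} (hadd : ∀ x ∈ S, ∀ y ∈ S, x + y ∈ S)
    {d P Q q : ℕ} (hd : 0 < d) (hP : P ∈ S) (hQ : Q ∈ S) (hPQ : P = Q + d)
    (hq : Q = q * d) (hq1 : 1 ≤ q) :
    ∀ m, q * q ≤ m → m * d ∈ S := by
  intro m hm
  set a := m / q with ha
  set r := m % q with hr
  have hqpos : 0 < q := hq1
  have hmod := Nat.div_add_mod m q
  have hrq : r < q := Nat.mod_lt _ hqpos
  have haq : q ≤ a := (Nat.le_div_iff_mul_le hqpos).mpr hm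
  have h2 : r ≤ a := by omega
  have key : m * d = (a - r) * Q + r * P := by
    have hm' : (m : ℤ) = q * a + r := by exact_mod_cast hmod.symm
    have hqz : (Q : ℤ) = q * d := by exact_mod_cast hq
    have hpz : (P : ℤ) = q * d + d := by push_cast [hPQ, hq]; ring
    zify [h2]
    rw [hm', hqz, hpz]; ring
  rw [key]
  rcases Nat.eq_zero_or_pos r with h | h
  · rw [h]
    simp only [Nat.sub_zero, Nat.zero_mul, Nat.add_zero]
    exact nsmul_mem hadd hQ a (by omega)
  · exact hadd _ (nsmul_mem hadd hQ (a - r) (by omega)) _ (nsmul_mem hadd hP r h)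

lemma exists_PQ {S : Set ℕ} (hadd : ∀ x ∈ S, ∀ y ∈ S, x + y ∈ S)
    {d : ℕ} (hd : 0 < d) (hdvd : ∀ s ∈ S, d ∣ s)
    (hg : ∀ g : ℕ, (∀ s ∈ S, g ∣ s) → g ∣ d) :
    ∃ N, ∀ m, N ≤ m → m * d ∈ S := by
  classical
  -- the submonoid of ℤ given by S together with 0
  set M₀ : AddSubmonoid ℤ :=
    { carrier := {x | x = 0 ∨ ∃ s ∈ S, x = (s : ℤ)}
      zero_mem' := Or.inl rfl
      add_mem' := by
        rintro x y (rfl | ⟨s, hs, rfl⟩) (rfl | ⟨t, ht, rfl⟩)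
        · exact Or.inl (by ring)
        · exact Or.inr ⟨t, ht, by ring⟩
        · exact Or.inr ⟨s, hs, by ring⟩
        · exact Or.inr ⟨s + t, hadd s hs t ht, by push_cast; ring⟩ } with hM₀
  -- the subgroup of differences
  set Dg : AddSubgroup ℤ :=
    { carrier := {x | ∃ p ∈ M₀, ∃ q ∈ M₀, x = p - q}
      zero_mem' := ⟨0, M₀.zero_mem, 0, M₀.zero_mem, by ring⟩
      add_mem' := by
        rintro x y ⟨p, hp, q, hq, rfl⟩ ⟨p', hp', q', hq', rfl⟩
        exact ⟨p + p', M₀.add_mem hp hp', q + q', M₀.add_mem hq hq', by ring⟩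
      neg_mem' := by
        rintro x ⟨p, hp, q, hq, rfl⟩
        exact ⟨q, hq, p, hp, by ring⟩ } with hDg
  set T : Set ℤ := (fun s : ℕ => (s : ℤ)) '' S with hT
  set H : AddSubgroup ℤ := AddSubgroup.closure T with hH
  obtain ⟨g, hgH⟩ := Int.subgroup_cyclic H
  have hgs : ∀ s ∈ S, g ∣ (s : ℤ) := by
    intro s hs
    have hmem : (s : ℤ) ∈ H := AddSubgroup.subset_closure ⟨s, hs, rfl⟩
    rw [hgH, AddSubgroup.mem_closure_singleton] at hmem
    obtain ⟨k, hk⟩ := hmem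
    exact Dvd.intro_left k (by rw [← hk]; simp [zsmul_eq_mul])
  have hgnat : ∀ s ∈ S, g.natAbs ∣ s := by
    intro s hs
    have := Int.natAbs_dvd_natAbs.mpr (hgs s hs)
    simpa using this
  have hgd : g.natAbs ∣ d := hg _ hgnat
  have hHz : H ≤ AddSubgroup.zmultiples (d : ℤ) := by
    rw [hH]
    refine (AddSubgroup.closure_le _).mpr ?_
    rintro x ⟨s, hs, rfl⟩
    exact Int.mem_zmultiples_iff.mpr (Int.natCast_dvd_natCast.mpr (hdvd s hs))
  have hgmem : g ∈ H := by rw [hgH]; exact AddSubgroup.subset_closure rfl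
  have hdg : (d : ℤ) ∣ g := Int.mem_zmultiples_iff.mp (hHz hgmem)
  have hdgn : d ∣ g.natAbs := by
    have := Int.natAbs_dvd_natAbs.mpr hdg
    simpa using this
  have hdeq : g.natAbs = d := Nat.dvd_antisymm hgd hdgn
  have hdH : (d : ℤ) ∈ H := by
    rcases Int.natAbs_eq g with h | h
    · have : (d : ℤ) = g := by rw [h, hdeq]
      rwa [this]
    · have : (d : ℤ) = -g := by rw [h, hdeq]; ring
      rw [this]; exact H.neg_mem hgmem
  have hHD : H ≤ Dg := by
    rw [hH]
    refine (AddSubgroup.closure_le _).mpr ?_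
    rintro x ⟨s, hs, rfl⟩
    exact ⟨(s : ℤ), Or.inr ⟨s, hs, rfl⟩, 0, Or.inl rfl, by ring⟩
  obtain ⟨p, hp, qz, hqz, hpq⟩ := hHD hdH
  -- extract naturals
  obtain ⟨P0, hP0mem, hP0eq⟩ : ∃ P0 : ℕ, (P0 ∈ S ∨ P0 = 0) ∧ p = (P0 : ℤ) := by
    rcases hp with rfl | ⟨s, hs, rfl⟩
    · exact ⟨0, Or.inr rfl, by simp⟩
    · exact ⟨s, Or.inl hs, rfl⟩
  obtain ⟨Q0, hQ0mem, hQ0eq⟩ : ∃ Q0 : ℕ, (Q0 ∈ S ∨ Q0 = 0) ∧ qz = (Q0 : ℤ) := by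
    rcases hqz with rfl | ⟨s, hs, rfl⟩
    · exact ⟨0, Or.inr rfl, by simp⟩
    · exact ⟨s, Or.inl hs, rfl⟩
  rw [hP0eq, hQ0eq] at hpq
  have hPQ0 : P0 = Q0 + d := by omega
  have hdQ0 : d ∣ Q0 := by
    rcases hQ0mem with h | rfl
    · exact hdvd _ h
    · exact dvd_zero d
  have hP0S : P0 ∈ S := by
    rcases hP0mem with h | h
    · exact h
    · omega
  -- normalize so that the smaller element is positive
  set Q1 := P0 + Q0 with hQ1
  set P1 := P0 + P0 with hP1
  have hQ1S : Q1 ∈ S := by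
    rcases hQ0mem with h | h
    · exact hadd _ hP0S _ h
    · rw [hQ1, h]; simpa using hP0S
  have hP1S : P1 ∈ S := hadd _ hP0S _ hP0S
  have hP1Q1 : P1 = Q1 + d := by omega
  have hdQ1 : d ∣ Q1 := by
    have : d ∣ P0 := by rw [hPQ0]; exact Dvd.dvd.add hdQ0 dvd_rfl
    exact Dvd.dvd.add this hdQ0
  obtain ⟨q, hq⟩ : ∃ q, Q1 = q * d := ⟨Q1 / d, (Nat.div_mul_cancel hdQ1).symm⟩
  have hq1 : 1 ≤ q := by
    have hQ1pos : 0 < Q1 := by omega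
    by_contra h
    have hq0 : q = 0 := by omega
    rw [hq0, Nat.zero_mul] at hq
    omega
  exact ⟨q * q, eventually_mul_mem hadd hd hP1S hQ1S hP1Q1 hq hq1⟩

lemma crt_family {n : ℕ} (d a : Fin n → ℕ)
    (hcop : ∀ k j, k ≠ j → Nat.Coprime (d k) (d j)) (s : Finset (Fin n)) :
    ∃ t : ℕ, ∀ k ∈ s, t ≡ a k [MOD d k] := by
  classical
  induction s using Finset.induction_on with
  | empty => exact ⟨0, by simp⟩
  | @insert k s hk ih =>
    obtain ⟨t, ht⟩ := ih
    have hco : Nat.Coprime (d k) (∏ j ∈ s, d j) :=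
      Nat.Coprime.prod_right fun j hj => hcop k j (by rintro rfl; exact hk hj)
    obtain ⟨c, hc1, hc2⟩ := Nat.chineseRemainder hco (a k) t
    refine ⟨c, fun j hj => ?_⟩
    rcases Finset.mem_insert.mp hj with rfl | hj
    · exact hc1
    · exact (hc2.of_dvd (Finset.dvd_prod_of_mem d hj)).trans (ht j hj)


open LabeledGraph
/-- From a strongly connected graph with period `d`: paths from `u` to `v` of length
`a + m*d` for all large `m`. -/
lemma exists_eventual {A' V E : Type*} (G : LabeledGraph A' V E)
    (hconn : G.StronglyConnected) {d : ℕ} (hper : G.HasPeriod d) (u v : V) :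
    ∃ a N : ℕ, 0 < d ∧ ∀ m, N ≤ m → G.HasPathLen u v (a + m * d) := by
  classical
  set S : Set ℕ := {ℓ | G.HasPathLen v v ℓ} with hS
  have hadd : ∀ x ∈ S, ∀ y ∈ S, x + y ∈ S := fun x hx y hy => hasPathLen_trans hx hy
  obtain ⟨es0, hes0⟩ := hconn v v
  have hS0 : es0.length ∈ S := hasPathLen_of_pathFromTo hes0
  have hdvd : ∀ s ∈ S, d ∣ s := by
    intro s hs
    obtain ⟨es, hlen, hp⟩ := pathFromTo_of_hasPathLen hs
    rw [← hlen]
    exact hper.1 es v hp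
  have hd : 0 < d := by
    rcases Nat.eq_zero_or_pos d with h | h
    · exfalso
      have h1 := hdvd _ hS0
      rw [h] at h1
      have := Nat.eq_zero_of_zero_dvd h1
      have h2 := (hS0 : G.HasPathLen v v es0.length).1
      omega
    · exact h
  have hg : ∀ g : ℕ, (∀ s ∈ S, g ∣ s) → g ∣ d := by
    intro g hgS
    apply hper.2
    intro es w hp
    have hw : G.HasPathLen w w es.length := hasPathLen_of_pathFromTo hp
    obtain ⟨p1, hp1⟩ := hconn v w
    obtain ⟨p2, hp2⟩ := hconn w v
    have h1 : G.HasPathLen v v (p1.length + p2.length) :=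
      hasPathLen_trans (hasPathLen_of_pathFromTo hp1) (hasPathLen_of_pathFromTo hp2)
    have h2 : G.HasPathLen v v (p1.length + es.length + p2.length) :=
      hasPathLen_trans (hasPathLen_trans (hasPathLen_of_pathFromTo hp1) hw)
        (hasPathLen_of_pathFromTo hp2)
    have hd1 := hgS _ h1
    have hd2 := hgS _ h2
    have := Nat.dvd_sub hd2 hd1
    have he : p1.length + es.length + p2.length - (p1.length + p2.length) = es.length := by
      omega
    rwa [he] at this
  obtain ⟨N, hN⟩ := exists_PQ hadd hd hdvd hg
  obtain ⟨esa, hesa⟩ := hconn u v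
  refine ⟨esa.length, N, hd, fun m hm => ?_⟩
  exact hasPathLen_trans (hasPathLen_of_pathFromTo hesa) (hN m hm)

lemma coupling_hasPathLen {A' : Type*} {n : ℕ} {V E : Fin n → Type*}
    (G : ∀ k, LabeledGraph A' (V k) (E k)) (b : A')
    (hsafe : ∀ k, (G k).SafeSymbol b) {ℓ : ℕ} (hl : 0 < ℓ) {u v : ∀ k, V k}
    (h : ∀ k, (G k).HasPathLen (u k) (v k) ℓ) :
    (coupling G).HasPathLen u v ℓ := by
  choose e he0 he1 hech using fun k => (h k).2
  choose f hf0 hf1 hfb using fun k j => hsafe k (e k j)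
  refine ⟨hl, fun j => ⟨(fun k => f k j, b), fun k => hfb k j⟩, ?_, ?_, ?_⟩
  · funext k
    show (G k).src (f k 0) = u k
    rw [hf0, he0]
  · funext k
    show (G k).dst (f k (ℓ - 1)) = v k
    rw [hf1, he1]
  · intro j hj
    funext k
    show (G k).dst (f k j) = (G k).src (f k (j + 1))
    rw [hf1, hf0]
    exact hech k j hj


/-- a coupling of strongly connected labeled graphs with a common safe
symbol and pairwise coprime periods is strongly connected. -/
theorem statement13 {A' : Type} [Fintype A'] (n : ℕ) (V E : Fin n → Type)
    [∀ k, Fintype (V k)] [∀ k, Fintype (E k)]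
    (G : ∀ k, LabeledGraph A' (V k) (E k))
    (hconn : ∀ k, (G k).StronglyConnected)
    (b : A') (hsafe : ∀ k, (G k).SafeSymbol b)
    (d : Fin n → ℕ) (hper : ∀ k, (G k).HasPeriod (d k))
    (hcop : ∀ k j, k ≠ j → Nat.Coprime (d k) (d j)) :
    (coupling G).StronglyConnected := by
  classical
  intro u v
  choose a N hd hmain using fun k => exists_eventual (G k) (hconn k) (hper k) (u k) (v k)
  obtain ⟨t, ht⟩ := crt_family d a hcop Finset.univ
  set B : ℕ := (Finset.univ.sup fun k => a k + N k * d k) + 1 with hB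
  set D : ℕ := ∏ k, d k with hD
  have hD1 : 1 ≤ D := Finset.one_le_prod' fun k _ => hd k
  have hBD : B ≤ B * D := Nat.le_mul_of_pos_right B hD1
  set ℓ : ℕ := t + B * D with hℓ
  have hl1 : 0 < ℓ := by omega
  have hall : ∀ k, (G k).HasPathLen (u k) (v k) ℓ := by
    intro k
    have hdk : d k ∣ B * D :=
      Dvd.dvd.mul_left (Finset.dvd_prod_of_mem d (Finset.mem_univ k)) B
    have hmod : ℓ ≡ a k [MOD d k] := by
      have h1 : t ≡ ℓ [MOD d k] := by
        rw [Nat.modEq_iff_dvd' (by omega)]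
        have : ℓ - t = B * D := by omega
        rwa [this]
      exact h1.symm.trans (ht k (Finset.mem_univ k))
    have hsup : a k + N k * d k < B := by
      have h0 := Finset.le_sup (f := fun k => a k + N k * d k) (Finset.mem_univ k)
      omega
    have hge : a k + N k * d k < ℓ := by
      calc a k + N k * d k < B := hsup
        _ ≤ B * D := hBD
        _ ≤ ℓ := by omega
    have hle : a k ≤ ℓ := by omega
    have hdvd2 : d k ∣ ℓ - a k := (Nat.modEq_iff_dvd' hle).mp hmod.symm
    obtain ⟨m, hm⟩ : ∃ m, ℓ - a k = m * d k := ⟨(ℓ - a k) / d k, (Nat.div_mul_cancel hdvd2).symm⟩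
    have h3 : N k * d k ≤ ℓ - a k := by omega
    have h4 : N k * d k ≤ m * d k := by rw [← hm]; exact h3
    have hmge : N k ≤ m := Nat.le_of_mul_le_mul_right h4 (hd k)
    have hpath := hmain k m hmge
    have heq : a k + m * d k = ℓ := by rw [← hm, Nat.add_sub_cancel' hle]
    rwa [heq] at hpath
  obtain ⟨es, _, hp⟩ := pathFromTo_of_hasPathLen (coupling_hasPathLen G b hsafe hl1 hall)
  exact ⟨es, hp⟩


end DbarPaper
end

section
/- Let n ∈ ℕ and for 1 ≤ k ≤ n let X_k ⊆ 𝒜^∞ be a sofic shift presented by a strongly connected 𝒜-labeled directed multigraph G_k, where the graphs G_1, …, G_n have a common safe symbol and pairwise coprime periods. Then Y = X_1 ∩ ⋯ ∩ X_n is a nonempty transitive sofic shift. Moreover, if each X_k is topologically mixing, then Y is topologically mixing. -/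
open MeasureTheory Filter Topology

namespace DbarPaper

variable {A : Type} [Fintype A] [DecidableEq A] [Inhabited A]
  [TopologicalSpace A] [DiscreteTopology A]
  [MeasurableSpace A] [MeasurableSingletonClass A]

set_option linter.unusedSectionVars false

section Auxiliary

/-! ### Basic graph/path auxiliary lemmas -/

/-- An infinite chain of edges in a labeled graph. -/
def ChainFn {A' V E : Type*} (G : LabeledGraph A' V E) (e : ℕ → E) : Prop :=
  ∀ j, G.dst (e j) = G.src (e (j + 1))

lemma mem_presents_iff {A' V E : Type*} (G : LabeledGraph A' V E) (x : ℕ → A') :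
    x ∈ G.presents ↔ ∃ e : ℕ → E, ChainFn G e ∧ ∀ j, x j = G.lab (e j) := Iff.rfl

lemma pathFromTo_ne_nil {A' V E : Type*} {G : LabeledGraph A' V E} {es : List E} {u v : V}
    (h : G.PathFromTo es u v) : es ≠ [] := by
  rcases h with ⟨-, h2, -⟩
  intro he; subst he; simp at h2

lemma pathFromTo_append {A' V E : Type*} {G : LabeledGraph A' V E} {es fs : List E} {u v w : V}
    (h1 : G.PathFromTo es u v) (h2 : G.PathFromTo fs v w) : G.PathFromTo (es ++ fs) u w := by
  have hes := pathFromTo_ne_nil h1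
  have hfs := pathFromTo_ne_nil h2
  obtain ⟨hc1, hh1, hl1⟩ := h1
  obtain ⟨hc2, hh2, hl2⟩ := h2
  refine ⟨List.IsChain.append hc1 hc2 ?_, ?_, ?_⟩
  · intro x hx y hy
    have hx' : es.getLast?.map G.dst = some (G.dst x) := by
      rw [Option.mem_def.mp hx]; rfl
    have hy' : fs.head?.map G.src = some (G.src y) := by
      rw [Option.mem_def.mp hy]; rfl
    have e1 : G.dst x = v := by rw [hx'] at hl1; exact Option.some.inj hl1
    have e2 : G.src y = v := by rw [hy'] at hh2; exact Option.some.inj hh2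
    rw [e1, e2]
  · rw [List.head?_append_of_ne_nil _ hes]; exact hh1
  · rw [List.getLast?_append_of_ne_nil _ hfs]; exact hl2

lemma exists_out_edge {A' V E : Type*} {G : LabeledGraph A' V E}
    (hconn : G.StronglyConnected) (v : V) : ∃ e : E, G.src e = v := by
  obtain ⟨es, hes⟩ := hconn v v
  have hne := pathFromTo_ne_nil hes
  obtain ⟨e, es', rfl⟩ := List.exists_cons_of_ne_nil hne
  refine ⟨e, ?_⟩
  have := hes.2.1
  simp only [List.head?_cons, Option.map_some] at this
  exact Option.some.inj this

lemma exists_out_edge_b {A' V E : Type*} {G : LabeledGraph A' V E} {b : A'}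
    (hconn : G.StronglyConnected) (hsafe : G.SafeSymbol b) (v : V) :
    ∃ e : E, G.src e = v ∧ G.lab e = b := by
  obtain ⟨e, he⟩ := exists_out_edge hconn v
  obtain ⟨e', h1, _, h3⟩ := hsafe e
  exact ⟨e', h1.trans he, h3⟩

/-- From every vertex there is an infinite path all of whose labels are `b`. -/
lemma exists_bpath {A' V E : Type*} {G : LabeledGraph A' V E} {b : A'}
    (hconn : G.StronglyConnected) (hsafe : G.SafeSymbol b) (v : V) :
    ∃ c : ℕ → E, G.src (c 0) = v ∧ ChainFn G c ∧ ∀ j, G.lab (c j) = b := by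
  choose f hf1 hf2 using fun u => exists_out_edge_b hconn hsafe u
  refine ⟨fun j => Nat.rec (f v) (fun _ e => f (G.dst e)) j, hf1 v, fun j => ?_, fun j => ?_⟩
  · exact (hf1 _).symm
  · cases j with
    | zero => exact hf2 v
    | succ j => exact hf2 _

lemma const_b_mem_presents {A' V E : Type*} {G : LabeledGraph A' V E} {b : A'}
    (hconn : G.StronglyConnected) (hsafe : G.SafeSymbol b) (hV : Nonempty V) :
    (fun _ : ℕ => b) ∈ G.presents := by
  obtain ⟨v⟩ := hV
  obtain ⟨c, -, hc2, hc3⟩ := exists_bpath hconn hsafe v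
  exact ⟨c, hc2, fun j => (hc3 j).symm⟩

lemma presents_isClosed {V E : Type*} [Finite E] (G : LabeledGraph A V E) :
    IsClosed G.presents := by
  letI : TopologicalSpace E := ⊥
  haveI : DiscreteTopology E := ⟨rfl⟩
  have hc : Continuous (fun (e : ℕ → E) (j : ℕ) => G.lab (e j)) :=
    continuous_pi fun j => (continuous_of_discreteTopology).comp (continuous_apply j)
  have hP : IsClosed {e : ℕ → E | ChainFn G e} := by
    have : {e : ℕ → E | ChainFn G e} =
        ⋂ j : ℕ, (fun e : ℕ → E => (e j, e (j+1))) ⁻¹' {p : E × E | G.dst p.1 = G.src p.2} := by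
      ext e; simp [ChainFn, Set.mem_iInter]
    rw [this]
    exact isClosed_iInter fun j =>
      (isClosed_discrete _).preimage (((continuous_apply j).prodMk (continuous_apply (j+1))))
  have himg : G.presents = (fun (e : ℕ → E) (j : ℕ) => G.lab (e j)) '' {e | ChainFn G e} := by
    ext x
    constructor
    · rintro ⟨e, h1, h2⟩; exact ⟨e, h1, funext fun j => (h2 j).symm⟩
    · rintro ⟨e, h1, h2⟩; exact ⟨e, h1, fun j => congrFun h2.symm j⟩
  rw [himg]
  exact (hP.isCompact.image hc).isClosed

lemma presents_shift_invariant {V E : Type*} (G : LabeledGraph A V E) {x : ℕ → A}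
    (hx : x ∈ G.presents) : shift x ∈ G.presents := by
  obtain ⟨e, h1, h2⟩ := hx
  exact ⟨fun j => e (j + 1), fun j => h1 (j + 1), fun j => h2 (j + 1)⟩

/-! ### Gluing paths -/

/-- Glue a length-`m` initial segment of `e` with `f`. -/
def glue {E : Type*} (m : ℕ) (e f : ℕ → E) : ℕ → E := fun j => if j < m then e j else f (j - m)

lemma chainFn_glue {A' V E : Type*} {G : LabeledGraph A' V E} {m : ℕ} (hm : 0 < m)
    {e f : ℕ → E} (he : ∀ j, j + 1 < m → G.dst (e j) = G.src (e (j + 1)))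
    (hseam : G.dst (e (m - 1)) = G.src (f 0)) (hf : ChainFn G f) :
    ChainFn G (glue m e f) := by
  intro j
  rcases lt_trichotomy (j + 1) m with h | h | h
  · simp only [glue, if_pos (by omega : j < m), if_pos h]
    exact he j h
  · simp only [glue, if_pos (by omega : j < m), if_neg (by omega : ¬ j + 1 < m)]
    have h1 : j = m - 1 := by omega
    have h2 : j + 1 - m = 0 := by omega
    rw [h2, h1]; exact hseam
  · simp only [glue, if_neg (by omega : ¬ j < m), if_neg (by omega : ¬ j + 1 < m)]
    have h2 : j + 1 - m = (j - m) + 1 := by omega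
    rw [h2]; exact hf (j - m)

end Auxiliary

section Auxiliary2

/-! ### Words and occurrences -/

lemma occursIn_getD {w : List A} {x : ℕ → A} {i : ℕ}
    (h : w = List.ofFn (fun k : Fin w.length => x (i + (k : ℕ))))
    {j : ℕ} (hj : j < w.length) (b : A) : w.getD j b = x (i + j) := by
  rw [List.getD_eq_getElem w b hj, List.getElem_of_eq h hj, List.getElem_ofFn]

lemma occursIn_of_getD {w : List A} {x : ℕ → A} (i : ℕ) (b : A)
    (h : ∀ j, j < w.length → w.getD j b = x (i + j)) : occursIn w x := by
  refine ⟨i, List.ext_getElem (by simp) fun j hj hj' => ?_⟩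
  rw [List.getElem_ofFn]
  rw [← List.getD_eq_getElem w b hj]
  exact h j hj

/-- The sequence `u b^m w b^∞`. -/
def zword (b : A) (u w : List A) (m : ℕ) : ℕ → A := fun j =>
  if j < u.length then u.getD j b
  else if j < u.length + m then b
  else if j < u.length + m + w.length then w.getD (j - u.length - m) b
  else b

lemma zword_occurs (b : A) (u w : List A) (m : ℕ) :
    occursIn (u ++ List.replicate m b ++ w) (zword b u w m) := by
  apply occursIn_of_getD 0 b
  intro j hj
  simp only [List.length_append, List.length_replicate] at hj
  rw [zero_add]
  rcases Nat.lt_or_ge j u.length with h1 | h1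
  · have e1 : (u ++ List.replicate m b ++ w).getD j b = u.getD j b := by
      rw [List.getD_eq_getElem _ b (by simp [List.length_append, List.length_replicate]; omega),
        List.getD_eq_getElem _ b h1]
      rw [List.getElem_append_left (by simp [List.length_append, List.length_replicate]; omega),
        List.getElem_append_left h1]
    rw [e1]
    simp only [zword, if_pos h1]
  rcases Nat.lt_or_ge j (u.length + m) with h2 | h2
  · have e1 : (u ++ List.replicate m b ++ w).getD j b = b := by
      rw [List.getD_eq_getElem _ b (by simp [List.length_append, List.length_replicate]; omega)]
      rw [List.getElem_append_left (by simp [List.length_append, List.length_replicate]; omega)]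
      rw [List.getElem_append_right h1]
      exact List.getElem_replicate ..
    rw [e1]
    simp only [zword, if_neg (by omega : ¬ j < u.length), if_pos h2]
  · have e1 : (u ++ List.replicate m b ++ w).getD j b = w.getD (j - u.length - m) b := by
      rw [List.getD_eq_getElem _ b (by simp [List.length_append, List.length_replicate]; omega),
        List.getD_eq_getElem _ b (by omega)]
      rw [List.getElem_append_right (by simp [List.length_append, List.length_replicate]; omega)]
      congr 1
      simp [List.length_append, List.length_replicate]
      omega
    rw [e1]
    simp only [zword, if_neg (by omega : ¬ j < u.length), if_neg (by omega : ¬ j < u.length + m),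
      if_pos (by omega : j < u.length + m + w.length)]

/-! ### Numerical semigroup lemmas -/

lemma addclosure_large (F : Finset ℕ) :
    ∃ M : ℕ, 0 < M ∧ ∀ m : ℕ, F.gcd id ∣ m → M ≤ m →
      m ∈ AddSubmonoid.closure (F : Set ℕ) := by
  classical
  induction F using Finset.induction_on with
  | empty =>
      refine ⟨1, one_pos, fun m hdvd hM => ?_⟩
      simp only [Finset.gcd_empty, zero_dvd_iff] at hdvd
      omega
  | @insert a F ha ih =>
      obtain ⟨M', hM'pos, hM'⟩ := ih
      have hgcd : (insert a F).gcd id = Nat.gcd a (F.gcd id) := by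
        rw [Finset.gcd_insert]; rfl
      set g' := F.gcd id with hg'
      have hmono : AddSubmonoid.closure (F : Set ℕ) ≤
          AddSubmonoid.closure ((insert a F : Finset ℕ) : Set ℕ) :=
        AddSubmonoid.closure_mono (by simp [Set.subset_insert])
      have hamem : (a : ℕ) ∈ AddSubmonoid.closure ((insert a F : Finset ℕ) : Set ℕ) :=
        AddSubmonoid.subset_closure (by simp)
      by_cases ha0 : a = 0
      · refine ⟨M', hM'pos, fun m hdvd hM => ?_⟩
        rw [hgcd, ha0, Nat.gcd_zero_left] at hdvd
        exact hmono (hM' m hdvd hM)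
      by_cases hg0 : g' = 0
      · refine ⟨1, one_pos, fun m hdvd hM => ?_⟩
        rw [hgcd, hg0, Nat.gcd_zero_right] at hdvd
        obtain ⟨t, rfl⟩ := hdvd
        have : t • a ∈ AddSubmonoid.closure ((insert a F : Finset ℕ) : Set ℕ) :=
          AddSubmonoid.nsmul_mem _ hamem t
        simpa [nsmul_eq_mul, mul_comm] using this
      · -- main case : a > 0, g' > 0
        have hapos : 0 < a := Nat.pos_of_ne_zero ha0
        have hg'pos : 0 < g' := Nat.pos_of_ne_zero hg0
        set g := Nat.gcd a g' with hgdef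
        have hgpos : 0 < g := Nat.gcd_pos_of_pos_left g' hapos
        set g'' := g' / g with hg''def
        have hgdvd' : g ∣ g' := Nat.gcd_dvd_right a g'
        have hgdvda : g ∣ a := Nat.gcd_dvd_left a g'
        have hg''pos : 0 < g'' := Nat.div_pos (Nat.le_of_dvd hg'pos hgdvd') hgpos
        haveI : NeZero g'' := ⟨by omega⟩
        refine ⟨M' + g' * a, by positivity, fun m hdvd hM => ?_⟩
        rw [hgcd] at hdvd
        -- find β < g'' with β * a ≡ m [MOD g']
        have hcop : Nat.Coprime (a / g) g'' := Nat.coprime_div_gcd_div_gcd hgpos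
        set β := (((m / g : ℕ) : ZMod g'') * ((a / g : ℕ) : ZMod g'')⁻¹).val with hβdef
        have hβlt : β < g'' := ZMod.val_lt _
        have hunit : IsUnit ((a / g : ℕ) : ZMod g'') := (ZMod.isUnit_iff_coprime _ _).mpr hcop
        have hcast : (((a / g) * β : ℕ) : ZMod g'') = ((m / g : ℕ) : ZMod g'') := by
          push_cast
          rw [hβdef, ZMod.natCast_val, ZMod.cast_id]
          rw [mul_comm (((m / g : ℕ) : ZMod g'')) _, ← mul_assoc,
            ZMod.mul_inv_of_unit _ hunit, one_mul]
        have hmodeq : (a / g) * β ≡ m / g [MOD g''] := (ZMod.natCast_eq_natCast_iff _ _ _).mp hcast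
        have hmodeq2 : ((a / g) * β) * g ≡ (m / g) * g [MOD g'' * g] :=
          Nat.ModEq.mul_right' g hmodeq
        have e1 : ((a / g) * β) * g = β * a := by
          rw [mul_comm (a / g) β, mul_assoc, Nat.div_mul_cancel hgdvda]
        have e2 : (m / g) * g = m := Nat.div_mul_cancel hdvd
        have e3 : g'' * g = g' := Nat.div_mul_cancel hgdvd'
        rw [e1, e2, e3] at hmodeq2
        -- now β * a ≡ m [MOD g'], β < g'' ≤ g'
        have hβa : β * a ≤ g' * a := Nat.mul_le_mul_right a (by
          have : g'' ≤ g' := Nat.div_le_self g' g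
          omega)
        have hle : β * a ≤ m := le_trans hβa (by omega)
        have hdvd2 : g' ∣ m - β * a := (Nat.modEq_iff_dvd' hle).mp hmodeq2
        have hrest : m - β * a ∈ AddSubmonoid.closure (F : Set ℕ) :=
          hM' _ hdvd2 (by omega)
        have hsum : β * a + (m - β * a) ∈
            AddSubmonoid.closure ((insert a F : Finset ℕ) : Set ℕ) := by
          refine AddSubmonoid.add_mem _ ?_ (hmono hrest)
          simpa [nsmul_eq_mul] using AddSubmonoid.nsmul_mem _ hamem β
        have : β * a + (m - β * a) = m := by omega
        rwa [this] at hsum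

lemma numeric_semigroup (S : Set ℕ) (hadd : ∀ a ∈ S, ∀ b ∈ S, a + b ∈ S) (d : ℕ)
    (hd : ∀ s ∈ S, d ∣ s) (hmax : ∀ e : ℕ, (∀ s ∈ S, e ∣ s) → e ∣ d)
    (hpos : ∃ s ∈ S, 0 < s) :
    ∃ M : ℕ, 0 < M ∧ ∀ m : ℕ, d ∣ m → M ≤ m → m ∈ S := by
  classical
  obtain ⟨s₀, hs₀S, hs₀pos⟩ := hpos
  -- Step A: find a finite subset of S with gcd equal to d
  have stepA : ∀ g : ℕ, ∀ F : Finset ℕ, ↑F ⊆ S → F.gcd id = g → d ∣ g → 0 < g →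
      ∃ F' : Finset ℕ, ↑F' ⊆ S ∧ F'.gcd id = d := by
    intro g
    induction g using Nat.strong_induction_on with
    | _ g ih =>
      intro F hFS hgcd hdg hgpos
      by_cases hgd : g = d
      · exact ⟨F, hFS, by rw [hgcd, hgd]⟩
      · have hex : ∃ s ∈ S, ¬ g ∣ s := by
          by_contra hcon
          push_neg at hcon
          exact hgd (Nat.dvd_antisymm (hmax g hcon) hdg)
        obtain ⟨s, hsS, hgs⟩ := hex
        have hlt : Nat.gcd s g < g :=
          lt_of_le_of_ne (Nat.le_of_dvd hgpos (Nat.gcd_dvd_right s g))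
            (fun hcontra => hgs (hcontra ▸ Nat.gcd_dvd_left s g))
        refine ih (Nat.gcd s g) hlt (insert s F) ?_ ?_ ?_ ?_
        · intro t ht
          simp only [Finset.coe_insert, Set.mem_insert_iff] at ht
          rcases ht with rfl | ht
          · exact hsS
          · exact hFS ht
        · rw [Finset.gcd_insert, hgcd]; rfl
        · exact Nat.dvd_gcd (hd s hsS) hdg
        · exact Nat.gcd_pos_of_pos_right s hgpos
  obtain ⟨F, hFS, hFgcd⟩ := stepA s₀ {s₀} (by simpa using hs₀S) (by simp) (hd s₀ hs₀S) hs₀pos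
  obtain ⟨M, hMpos, hM⟩ := addclosure_large F
  refine ⟨M, hMpos, fun m hdvd hMm => ?_⟩
  have hmem : m ∈ AddSubmonoid.closure (F : Set ℕ) := hM m (hFgcd ▸ hdvd) hMm
  -- closure F ⊆ insert 0 S
  have hSmon : ∀ t ∈ AddSubmonoid.closure (F : Set ℕ), t ∈ insert 0 S := by
    intro t ht
    refine AddSubmonoid.closure_induction ?_ ?_ ?_ ht
    · intro y hy; exact Set.mem_insert_iff.mpr (Or.inr (hFS hy))
    · exact Set.mem_insert 0 S
    · intro y z _ _ hy hz
      rcases Set.mem_insert_iff.mp hy with rfl | hy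
      · simpa using hz
      rcases Set.mem_insert_iff.mp hz with rfl | hz
      · simpa using Set.mem_insert_iff.mpr (Or.inr hy)
      · exact Set.mem_insert_iff.mpr (Or.inr (hadd y hy z hz))
  rcases Set.mem_insert_iff.mp (hSmon m hmem) with rfl | h
  · omega
  · exact h

end Auxiliary2

section Auxiliary3

/-! ### From list paths to function paths, bridges, CRT -/

lemma pathFromTo_fn {A' V E : Type*} {G : LabeledGraph A' V E} {es : List E} {u v : V}
    (h : G.PathFromTo es u v) :
    ∃ c : ℕ → E, G.src (c 0) = u ∧
      (∀ j, j + 1 < es.length → G.dst (c j) = G.src (c (j + 1))) ∧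
      G.dst (c (es.length - 1)) = v ∧
      ∀ j, (hj : j < es.length) → c j = es[j] := by
  have hne := pathFromTo_ne_nil h
  have hlen : 0 < es.length := List.length_pos_iff.mpr hne
  obtain ⟨hc, hh, hl⟩ := h
  refine ⟨fun j => es.getD j (es.head hne), ?_, ?_, ?_, ?_⟩
  · have e0 : es.getD 0 (es.head hne) = es.head hne := by
      rw [List.getD_eq_getElem _ _ hlen, List.getElem_zero hlen]
    show G.src (es.getD 0 (es.head hne)) = u
    rw [e0]
    rw [List.head?_eq_head hne] at hh
    simpa using hh
  · intro j hj
    show G.dst (es.getD j (es.head hne)) = G.src (es.getD (j+1) (es.head hne))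
    rw [List.getD_eq_getElem _ _ (by omega : j < es.length), List.getD_eq_getElem _ _ hj]
    replace hc := List.isChain_iff_getElem.mp hc
    exact hc j (by omega)
  · show G.dst (es.getD (es.length - 1) (es.head hne)) = v
    rw [List.getD_eq_getElem _ _ (by omega : es.length - 1 < es.length)]
    rw [List.getLast?_eq_getLast hne] at hl
    have : G.dst (es.getLast hne) = v := by simpa using hl
    rwa [List.getLast_eq_getElem hne] at this
  · intro j hj
    show es.getD j (es.head hne) = es[j]
    exact List.getD_eq_getElem _ _ hj

/-- In a strongly connected graph with period `d` and safe symbol `b`, there are `b`-labeled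
bridges between any two vertices of every sufficiently large length in a fixed residue
class mod `d`. -/
lemma exists_bridge {A' V E : Type*} {G : LabeledGraph A' V E} {b : A'} {d : ℕ}
    (hconn : G.StronglyConnected) (hper : G.HasPeriod d) (hsafe : G.SafeSymbol b)
    (p q : V) :
    ∃ r M : ℕ, 0 < M ∧ ∀ m, M ≤ m → m % d = r % d →
      ∃ c : ℕ → E, G.src (c 0) = p ∧ (∀ j, j + 1 < m → G.dst (c j) = G.src (c (j + 1))) ∧
        G.dst (c (m - 1)) = q ∧ ∀ j, j < m → G.lab (c j) = b := by
  classical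
  set S : Set ℕ := {L | ∃ es : List E, G.PathFromTo es q q ∧ es.length = L} with hSdef
  have hadd : ∀ a ∈ S, ∀ c ∈ S, a + c ∈ S := by
    rintro a ⟨es, hes, rfl⟩ c ⟨fs, hfs, rfl⟩
    exact ⟨es ++ fs, pathFromTo_append hes hfs, by simp⟩
  have hd : ∀ s ∈ S, d ∣ s := by
    rintro s ⟨es, hes, rfl⟩
    exact hper.1 es q hes
  have hmax : ∀ e : ℕ, (∀ s ∈ S, e ∣ s) → e ∣ d := by
    intro e he
    refine hper.2 e ?_
    intro ls x hls
    obtain ⟨c1, hc1⟩ := hconn q x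
    obtain ⟨c2, hc2⟩ := hconn x q
    have h1 : (c1 ++ c2).length ∈ S := ⟨c1 ++ c2, pathFromTo_append hc1 hc2, rfl⟩
    have h2 : (c1 ++ (ls ++ c2)).length ∈ S :=
      ⟨c1 ++ (ls ++ c2), pathFromTo_append hc1 (pathFromTo_append hls hc2), rfl⟩
    have d1 := he _ h1
    have d2 := he _ h2
    simp only [List.length_append] at d1 d2
    have : ls.length = (c1.length + (ls.length + c2.length)) - (c1.length + c2.length) := by
      omega
    rw [this]
    exact Nat.dvd_sub d2 d1
  have hpos : ∃ s ∈ S, 0 < s := by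
    obtain ⟨es, hes⟩ := hconn q q
    exact ⟨es.length, ⟨es, hes, rfl⟩, List.length_pos_iff.mpr (pathFromTo_ne_nil hes)⟩
  obtain ⟨M₀, hM₀pos, hM₀⟩ := numeric_semigroup S hadd d hd hmax hpos
  obtain ⟨es₀, hes₀⟩ := hconn p q
  set a := es₀.length with hadef
  have hapos : 0 < a := List.length_pos_iff.mpr (pathFromTo_ne_nil hes₀)
  refine ⟨a, a + M₀, by omega, fun m hm hmod => ?_⟩
  have hdvd : d ∣ m - a := by
    have : a ≡ m [MOD d] := hmod.symm
    exact (Nat.modEq_iff_dvd' (by omega)).mp this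
  obtain ⟨es₁, hes₁, hlen₁⟩ := hM₀ (m - a) hdvd (by omega)
  have hpath : G.PathFromTo (es₀ ++ es₁) p q := pathFromTo_append hes₀ hes₁
  -- relabel with b
  choose φ hφ1 hφ2 hφ3 using hsafe
  set es := (es₀ ++ es₁).map φ with hesdef
  have hlen : es.length = m := by
    simp only [hesdef, List.length_map, List.length_append]
    omega
  have hpath' : G.PathFromTo es p q := by
    obtain ⟨hc, hh, hl⟩ := hpath
    refine ⟨?_, ?_, ?_⟩
    · rw [hesdef]; refine (List.isChain_map φ).mpr ?_
      refine hc.imp ?_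
      intro x y hxy
      rw [hφ2, hφ1]; exact hxy
    · rw [hesdef, List.head?_map, Option.map_map,
        show G.src ∘ φ = G.src from funext fun e => hφ1 e]
      exact hh
    · rw [hesdef, List.getLast?_map, Option.map_map,
        show G.dst ∘ φ = G.dst from funext fun e => hφ2 e]
      exact hl
  obtain ⟨c, hc1, hc2, hc3, hc4⟩ := pathFromTo_fn hpath'
  rw [hlen] at hc2 hc3
  refine ⟨c, hc1, hc2, hc3, fun j hj => ?_⟩
  rw [hc4 j (by omega)]
  have : es[j]'(by omega) = φ ((es₀ ++ es₁)[j]'(by simp only [List.length_append]; simp only [hesdef, List.length_map, List.length_append] at hlen; omega)) := by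
    simp only [hesdef, List.getElem_map]
  rw [this, hφ3]

/-- Simultaneous congruences with pairwise coprime moduli, above any bound. -/
lemma crt_large {n : ℕ} (d r M : Fin n → ℕ) (hd : ∀ k, 0 < d k)
    (hcop : ∀ k j, k ≠ j → Nat.Coprime (d k) (d j)) :
    ∃ m : ℕ, (∀ k, M k ≤ m) ∧ ∀ k, m % d k = r k % d k := by
  classical
  obtain ⟨k₀, hk₀⟩ := Nat.chineseRemainderOfFinset r d Finset.univ
    (fun i _ => Nat.pos_iff_ne_zero.mp (hd i))
    (fun i _ j _ hij => hcop i j hij)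
  set D := ∏ i : Fin n, d i with hDdef
  have hDpos : 0 < D := Finset.prod_pos fun i _ => hd i
  set B := (∑ k : Fin n, M k) + 1 with hBdef
  refine ⟨k₀ + D * B, fun k => ?_, fun k => ?_⟩
  · have h1 : M k ≤ B := by
      have := Finset.single_le_sum (f := M) (fun i _ => Nat.zero_le _) (Finset.mem_univ k)
      omega
    have h2 : B ≤ D * B := Nat.le_mul_of_pos_left B hDpos
    omega
  · have hdk : d k ∣ D * B :=
      dvd_mul_of_dvd_left (Finset.dvd_prod_of_mem d (Finset.mem_univ k)) B
    have h1 : k₀ + D * B ≡ k₀ [MOD d k] := by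
      have : k₀ ≡ k₀ + D * B [MOD d k] := (Nat.modEq_iff_dvd' (by omega)).mpr (by simpa using hdk)
      exact this.symm
    exact h1.trans (hk₀ k (Finset.mem_univ k))

end Auxiliary3

section Auxiliary4

lemma lang_mono {X Y : Set (ℕ → A)} (h : X ⊆ Y) : lang X ⊆ lang Y := by
  rintro wd ⟨x, hx, hocc⟩; exact ⟨x, h hx, hocc⟩

lemma period_pos {A' V E : Type*} {G : LabeledGraph A' V E} {d : ℕ}
    (hconn : G.StronglyConnected) (hper : G.HasPeriod d) (hV : Nonempty V) : 0 < d := by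
  obtain ⟨v⟩ := hV
  obtain ⟨es, hes⟩ := hconn v v
  have h1 := hper.1 es v hes
  have hlen : 0 < es.length := List.length_pos_iff.mpr (pathFromTo_ne_nil hes)
  rcases Nat.eq_zero_or_pos d with h | h
  · subst h; simp only [zero_dvd_iff] at h1; omega
  · exact h

lemma getD_append3_left (u v w : List A) (b : A) {j : ℕ} (h : j < u.length) :
    (u ++ v ++ w).getD j b = u.getD j b := by
  rw [List.getD_eq_getElem _ b (by simp; omega), List.getD_eq_getElem _ b h,
    List.getElem_append_left (by simp; omega), List.getElem_append_left h]

lemma getD_append3_mid (u v w : List A) (b : A) {j : ℕ} (h1 : u.length ≤ j)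
    (h2 : j < u.length + v.length) :
    (u ++ v ++ w).getD j b = v.getD (j - u.length) b := by
  rw [List.getD_eq_getElem _ b (by simp; omega), List.getD_eq_getElem _ b (by omega),
    List.getElem_append_left (by simp; omega), List.getElem_append_right h1]

lemma getD_append3_right (u v w : List A) (b : A) {j : ℕ}
    (h1 : u.length + v.length ≤ j) (h2 : j < u.length + v.length + w.length) :
    (u ++ v ++ w).getD j b = w.getD (j - u.length - v.length) b := by
  rw [List.getD_eq_getElem _ b (by simp; omega), List.getD_eq_getElem _ b (by omega),
    List.getElem_append_right (by simp; omega)]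
  congr 1
  simp; omega

/-- Core transitivity construction. -/
lemma core_trans {n : ℕ} (hn : 0 < n) {V E : Fin n → Type*} (hV : ∀ k, Nonempty (V k))
    (G : ∀ k, LabeledGraph A (V k) (E k))
    (hconn : ∀ k, (G k).StronglyConnected)
    (b : A) (hsafe : ∀ k, (G k).SafeSymbol b)
    (d : Fin n → ℕ) (hper : ∀ k, (G k).HasPeriod (d k))
    (hcop : ∀ k j, k ≠ j → Nat.Coprime (d k) (d j))
    {u w : List A} (hu : u ∈ lang (⋂ k, (G k).presents))
    (hw : w ∈ lang (⋂ k, (G k).presents))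
    (hu0 : u ≠ []) (hw0 : w ≠ []) :
    ∃ m : ℕ, u ++ List.replicate m b ++ w ∈ lang (⋂ k, (G k).presents) := by
  classical
  obtain ⟨x, hxY, i, hxocc⟩ := hu
  obtain ⟨y, hyY, i', hyocc⟩ := hw
  choose e he1 he2 using fun k => Set.mem_iInter.mp hxY k
  choose f hf1 hf2 using fun k => Set.mem_iInter.mp hyY k
  have hL1 : 0 < u.length := List.length_pos_iff.mpr hu0
  have hL3 : 0 < w.length := List.length_pos_iff.mpr hw0
  have hbr := fun k => exists_bridge (hconn k) (hper k) (hsafe k)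
    ((G k).dst (e k (i + (u.length - 1)))) ((G k).src (f k i'))
  choose r M hMpos hbridge using hbr
  obtain ⟨m, hm1, hm2⟩ := crt_large d r M
    (fun k => period_pos (hconn k) (hper k) (hV k)) hcop
  have hmpos : 0 < m := lt_of_lt_of_le (hMpos ⟨0, hn⟩) (hm1 ⟨0, hn⟩)
  choose c hc1 hc2 hc3 hc4 using fun k => hbridge k m (hm1 k) (hm2 k)
  choose t ht1 ht2 ht3 using fun k =>
    exists_bpath (hconn k) (hsafe k) ((G k).dst (f k (i' + (w.length - 1))))
  refine ⟨m, zword b u w m, Set.mem_iInter.2 fun k => ?_, zword_occurs b u w m⟩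
  refine ⟨glue u.length (fun j => e k (i + j))
    (glue m (c k) (glue w.length (fun j => f k (i' + j)) (t k))), ?_, ?_⟩
  · refine chainFn_glue hL1 (fun j _ => he1 k (i + j)) ?_ ?_
    · show (G k).dst (e k (i + (u.length - 1))) =
        (G k).src (glue m (c k) (glue w.length (fun j => f k (i' + j)) (t k)) 0)
      rw [show glue m (c k) (glue w.length (fun j => f k (i' + j)) (t k)) 0 = c k 0 by
        simp [glue, hmpos]]
      exact (hc1 k).symm
    · refine chainFn_glue hmpos (hc2 k) ?_ ?_
      · show (G k).dst (c k (m - 1)) =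
          (G k).src (glue w.length (fun j => f k (i' + j)) (t k) 0)
        rw [show glue w.length (fun j => f k (i' + j)) (t k) 0 = f k (i' + 0) by
          simp [glue, hL3]]
        exact hc3 k
      · exact chainFn_glue hL3 (fun j _ => hf1 k (i' + j)) (ht1 k).symm (ht2 k)
  · intro j
    show zword b u w m j = (G k).lab
      (if j < u.length then e k (i + j)
       else if j - u.length < m then c k (j - u.length)
       else if j - u.length - m < w.length then f k (i' + (j - u.length - m))
       else t k (j - u.length - m - w.length))
    rcases Nat.lt_or_ge j u.length with h1 | h1
    · rw [if_pos h1]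
      simp only [zword, if_pos h1]
      rw [occursIn_getD hxocc h1 b]
      exact he2 k (i + j)
    rcases Nat.lt_or_ge j (u.length + m) with h2 | h2
    · rw [if_neg (by omega), if_pos (by omega : j - u.length < m)]
      simp only [zword, if_neg (by omega : ¬ j < u.length), if_pos h2]
      exact (hc4 k (j - u.length) (by omega)).symm
    rcases Nat.lt_or_ge j (u.length + m + w.length) with h3 | h3
    · rw [if_neg (by omega), if_neg (by omega), if_pos (by omega : j - u.length - m < w.length)]
      simp only [zword, if_neg (by omega : ¬ j < u.length),
        if_neg (by omega : ¬ j < u.length + m), if_pos h3]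
      rw [occursIn_getD hyocc (by omega : j - u.length - m < w.length) b]
      exact hf2 k (i' + (j - u.length - m))
    · rw [if_neg (by omega), if_neg (by omega), if_neg (by omega)]
      simp only [zword, if_neg (by omega : ¬ j < u.length),
        if_neg (by omega : ¬ j < u.length + m), if_neg (by omega : ¬ j < u.length + m + w.length)]
      exact (ht3 k _).symm

/-- Core mixing construction. -/
lemma core_mix {n : ℕ} {V E : Fin n → Type*}
    (G : ∀ k, LabeledGraph A (V k) (E k))
    (b : A) (hsafe : ∀ k, (G k).SafeSymbol b)
    (hmix : ∀ k, MixingShift ((G k).presents))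
    {u w : List A} (hu : u ∈ lang (⋂ k, (G k).presents))
    (hw : w ∈ lang (⋂ k, (G k).presents)) :
    ∃ N : ℕ, ∀ m, N ≤ m → u ++ List.replicate m b ++ w ∈ lang (⋂ k, (G k).presents) := by
  classical
  have hu' : ∀ k, u ∈ lang ((G k).presents) := fun k => lang_mono (Set.iInter_subset _ k) hu
  have hw' : ∀ k, w ∈ lang ((G k).presents) := fun k => lang_mono (Set.iInter_subset _ k) hw
  choose N hN using fun k => hmix k u (hu' k) w (hw' k)
  refine ⟨Finset.univ.sup N, fun m hm => ?_⟩
  refine ⟨zword b u w m, Set.mem_iInter.2 fun k => ?_, zword_occurs b u w m⟩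
  obtain ⟨v, hvlen, hword⟩ := hN k m (le_trans (Finset.le_sup (Finset.mem_univ k)) hm)
  obtain ⟨x, hx, i, hocc⟩ := hword
  obtain ⟨e, he1, he2⟩ := hx
  choose φ hφ1 hφ2 hφ3 using hsafe k
  have hlen : (u ++ v ++ w).length = u.length + m + w.length := by simp [hvlen]; omega
  refine ⟨fun j => if j < u.length ∨ (u.length + m ≤ j ∧ j < u.length + m + w.length)
      then e (i + j) else φ (e (i + j)), ?_, ?_⟩
  · intro j
    have hsrc : ∀ jj, (G k).src (if jj < u.length ∨
          (u.length + m ≤ jj ∧ jj < u.length + m + w.length)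
        then e (i + jj) else φ (e (i + jj))) = (G k).src (e (i + jj)) := by
      intro jj; split_ifs with h
      · rfl
      · exact hφ1 _
    have hdst : ∀ jj, (G k).dst (if jj < u.length ∨
          (u.length + m ≤ jj ∧ jj < u.length + m + w.length)
        then e (i + jj) else φ (e (i + jj))) = (G k).dst (e (i + jj)) := by
      intro jj; split_ifs with h
      · rfl
      · exact hφ2 _
    show (G k).dst _ = (G k).src _
    rw [hdst j, hsrc (j + 1)]
    exact he1 (i + j)
  · intro j
    show zword b u w m j = (G k).lab (if j < u.length ∨
        (u.length + m ≤ j ∧ j < u.length + m + w.length)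
      then e (i + j) else φ (e (i + j)))
    rcases Nat.lt_or_ge j u.length with h1 | h1
    · rw [if_pos (Or.inl h1)]
      simp only [zword, if_pos h1]
      have h4 : u.getD j b = (u ++ v ++ w).getD j b := (getD_append3_left u v w b h1).symm
      rw [h4, occursIn_getD hocc (by omega) b]
      exact he2 (i + j)
    rcases Nat.lt_or_ge j (u.length + m) with h2 | h2
    · rw [if_neg (by omega)]
      simp only [zword, if_neg (by omega : ¬ j < u.length), if_pos h2]
      exact (hφ3 _).symm
    rcases Nat.lt_or_ge j (u.length + m + w.length) with h3 | h3
    · rw [if_pos (Or.inr ⟨h2, h3⟩)]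
      simp only [zword, if_neg (by omega : ¬ j < u.length),
        if_neg (by omega : ¬ j < u.length + m), if_pos h3]
      have h4 : w.getD (j - u.length - m) b = (u ++ v ++ w).getD j b := by
        rw [getD_append3_right u v w b (by omega) (by omega), hvlen]
      rw [h4, occursIn_getD hocc (by omega) b]
      exact he2 (i + j)
    · rw [if_neg (by omega)]
      simp only [zword, if_neg (by omega : ¬ j < u.length),
        if_neg (by omega : ¬ j < u.length + m),
        if_neg (by omega : ¬ j < u.length + m + w.length)]
      exact (hφ3 _).symm

end Auxiliary4

/-- an intersection of transitive sofic shifts presented by strongly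
connected graphs with a common safe symbol and pairwise coprime periods is a nonempty
transitive sofic shift; it is topologically mixing whenever all the factors are. -/
theorem statement14 (hA : 2 ≤ Fintype.card A) (n : ℕ) (hn : 0 < n)
    (V E : Fin n → Type)
    [∀ k, Fintype (V k)] [∀ k, Fintype (E k)] (hV : ∀ k, Nonempty (V k))
    (G : ∀ k, LabeledGraph A (V k) (E k))
    (hconn : ∀ k, (G k).StronglyConnected)
    (b : A) (hsafe : ∀ k, (G k).SafeSymbol b)
    (d : Fin n → ℕ) (hper : ∀ k, (G k).HasPeriod (d k))
    (hcop : ∀ k j, k ≠ j → Nat.Coprime (d k) (d j)) :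
    ShiftSpace (⋂ k, (G k).presents) ∧ TransitiveShift (⋂ k, (G k).presents) ∧
    Sofic (⋂ k, (G k).presents) ∧
    ((∀ k, MixingShift ((G k).presents)) → MixingShift (⋂ k, (G k).presents)) := by
  classical
  have hbY : (fun _ : ℕ => b) ∈ ⋂ k, (G k).presents :=
    Set.mem_iInter.2 fun k => const_b_mem_presents (hconn k) (hsafe k) (hV k)
  refine ⟨⟨⟨_, hbY⟩, ?_, ?_⟩, ?_, ?_, ?_⟩
  · exact isClosed_iInter fun k => presents_isClosed (G k)
  · intro x hx
    exact Set.mem_iInter.2 fun k => presents_shift_invariant (G k) (Set.mem_iInter.mp hx k)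
  · -- transitivity
    intro u hu w hw
    by_cases hu0 : u = []
    · by_cases hw0 : w = []
      · subst hu0; subst hw0
        exact ⟨[], ⟨fun _ => b, hbY, ⟨0, by simp⟩⟩⟩
      · subst hu0
        have hb1 : [b] ∈ lang (⋂ k, (G k).presents) :=
          ⟨fun _ => b, hbY, ⟨0, by simp⟩⟩
        obtain ⟨m, hm⟩ := core_trans hn hV G hconn b hsafe d hper hcop hb1 hw
          (by simp) hw0
        exact ⟨[b] ++ List.replicate m b, by simpa [List.append_assoc] using hm⟩
    · by_cases hw0 : w = []
      · subst hw0
        have hb1 : [b] ∈ lang (⋂ k, (G k).presents) :=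
          ⟨fun _ => b, hbY, ⟨0, by simp⟩⟩
        obtain ⟨m, hm⟩ := core_trans hn hV G hconn b hsafe d hper hcop hu hb1
          hu0 (by simp)
        exact ⟨List.replicate m b ++ [b], by simpa [List.append_assoc] using hm⟩
      · obtain ⟨m, hm⟩ := core_trans hn hV G hconn b hsafe d hper hcop hu hw hu0 hw0
        exact ⟨List.replicate m b, hm⟩
  · -- sofic
    refine ⟨∀ k, V k, {p : (∀ k, E k) × A // ∀ k, (G k).lab (p.1 k) = p.2},
      inferInstance, Fintype.ofFinite _, coupling G, ?_⟩
    ext x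
    constructor
    · intro hx
      choose e he1 he2 using fun k => Set.mem_iInter.mp hx k
      refine ⟨fun j => ⟨⟨fun k => e k j, x j⟩, fun k => (he2 k j).symm⟩, fun j => ?_, fun j => rfl⟩
      funext k
      exact he1 k j
    · rintro ⟨e, he1, he2⟩
      refine Set.mem_iInter.2 fun k => ?_
      refine ⟨fun j => (e j).1.1 k, fun j => congrFun (he1 j) k, fun j => ?_⟩
      rw [he2 j]
      exact ((e j).2 k).symm
  · -- mixing
    intro hmix u hu w hw
    obtain ⟨N, hN⟩ := core_mix G b hsafe hmix hu hw
    exact ⟨N, fun m hm => ⟨List.replicate m b, List.length_replicate, hN m hm⟩⟩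

end DbarPaper
end

section
/- Let B_1 be a finite nonempty set of nonempty words over {0,1} and let (t(n))_{n≥1} be any sequence of integers with t(n) ≥ 2. Define inductively B_{n+1} = {b_1 b_2 ⋯ b_{t(n)} τ(n) : b_i ∈ B_n}, where τ(n) is the concatenation of all elements of B_n (in a fixed enumeration), let X_n be the coded shift generated by B_n, and let X = ⋂_{n≥1} X_n. Then X is a minimal shift space. -/
open MeasureTheory Filter Topology

namespace DbarPaper

variable {A : Type} [Fintype A] [DecidableEq A] [Inhabited A]
  [TopologicalSpace A] [DiscreteTopology A]
  [MeasurableSpace A] [MeasurableSingletonClass A]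

namespace S16

/-- flatten of the first `m` words -/
def ff (w : ℕ → List Bool) (m : ℕ) : List Bool := (List.ofFn fun i : Fin m => w i).flatten

lemma ff_succ (w : ℕ → List Bool) (m : ℕ) : ff w (m+1) = ff w m ++ w m := by
  unfold ff
  rw [List.ofFn_succ' (fun i : Fin (m+1) => w i), List.concat_eq_append,
    List.flatten_append]
  simp [Fin.coe_castSucc]

lemma ff_zero (w : ℕ → List Bool) : ff w 0 = [] := by simp [ff]

lemma le_ff_length {w : ℕ → List Bool} (hw : ∀ i, w i ≠ []) (m : ℕ) :
    m ≤ (ff w m).length := by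
  induction m with
  | zero => simp [ff_zero]
  | succ m ih =>
      rw [ff_succ, List.length_append]
      have := List.length_pos_iff.2 (hw m)
      omega

lemma ff_prefix (w : ℕ → List Bool) {m m' : ℕ} (h : m ≤ m') : ff w m <+: ff w m' := by
  obtain ⟨k, rfl⟩ := Nat.exists_eq_add_of_le h
  clear h
  induction k with
  | zero => exact List.prefix_refl _
  | succ k ih =>
      rw [show m + (k+1) = (m+k)+1 from rfl, ff_succ]
      exact ih.trans (List.prefix_append _ _)

lemma getD_of_prefix {l l' : List Bool} (h : l <+: l') {n : ℕ} (hn : n < l.length) (d : Bool) :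
    l'.getD n d = l.getD n d := by
  rw [List.getD_eq_getElem l d hn, List.getD_eq_getElem l' d (hn.trans_le h.length_le),
    h.getElem hn]

lemma concatSeq_eq {w : ℕ → List Bool} (hw : ∀ i, w i ≠ []) {m n : ℕ}
    (hn : n < (ff w m).length) : concatSeq w n = (ff w m).getD n default := by
  have h1 : n < (ff w (n+1)).length := lt_of_lt_of_le (Nat.lt_succ_self n) (le_ff_length hw _)
  show (ff w (n+1)).getD n default = (ff w m).getD n default
  rcases le_total m (n+1) with h | h
  · rw [getD_of_prefix (ff_prefix w h) hn]
  · rw [getD_of_prefix (ff_prefix w h) h1]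

/-- window of a sequence -/
def extract (x : ℕ → Bool) (i m : ℕ) : List Bool := List.ofFn fun k : Fin m => x (i + k)

@[simp] lemma extract_length (x : ℕ → Bool) (i m : ℕ) : (extract x i m).length = m := by
  simp [extract]

lemma extract_eq_of_agree {x y : ℕ → Bool} {i m : ℕ} (h : ∀ k < m, x (i+k) = y (i+k)) :
    extract x i m = extract y i m := by
  unfold extract; congr 1; funext k; exact h k k.2

lemma shift_iterate_apply (x : ℕ → Bool) (k n : ℕ) : shift^[k] x n = x (k + n) := by
  induction k generalizing x n with
  | zero => simp
  | succ k ih =>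
      rw [Function.iterate_succ_apply, ih]
      show x (k + (n+1)) = x (k + 1 + n)
      congr 1; omega

lemma extract_shift (x : ℕ → Bool) (k i m : ℕ) :
    extract (shift^[k] x) i m = extract x (k + i) m := by
  unfold extract; congr 1; funext j; rw [shift_iterate_apply]; congr 1; omega

lemma extract_concatSeq {w : ℕ → List Bool} (hw : ∀ i, w i ≠ []) {i m M : ℕ}
    (h : i + m ≤ (ff w M).length) :
    extract (concatSeq w) i m = ((ff w M).drop i).take m := by
  apply List.ext_getElem
  · simp; omega
  · intro j h1 h2
    have hj : j < m := by simpa using h1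
    have hij : i + j < (ff w M).length := by omega
    rw [List.getElem_take, List.getElem_drop]
    unfold extract
    refine (List.getElem_ofFn (f := fun k : Fin m => concatSeq w (i + k)) h1).trans ?_
    show concatSeq w (i + j) = _
    rw [concatSeq_eq hw hij, List.getD_eq_getElem _ _ hij]


/-- closure membership in the product space via finite agreement -/
lemma mem_closure_iff_agree {S : Set (ℕ → Bool)} {x : ℕ → Bool} :
    x ∈ closure S ↔ ∀ L : ℕ, ∃ z ∈ S, ∀ i < L, z i = x i := by
  constructor
  · intro hx L
    have hU : IsOpen {z : ℕ → Bool | ∀ i < L, z i = x i} := by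
      have : {z : ℕ → Bool | ∀ i < L, z i = x i} =
          ⋂ i ∈ Finset.range L, {z : ℕ → Bool | z i = x i} := by
        ext z; simp
      rw [this]
      refine isOpen_biInter_finset fun i _ => ?_
      have : {z : ℕ → Bool | z i = x i} = (fun z : ℕ → Bool => z i) ⁻¹' {x i} := by
        ext z; simp
      rw [this]
      exact (continuous_apply i).isOpen_preimage _ (isOpen_discrete _)
    have hxU : x ∈ {z : ℕ → Bool | ∀ i < L, z i = x i} := fun _ _ => rfl
    obtain ⟨z, hz1, hz2⟩ := mem_closure_iff.1 hx _ hU hxU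
    exact ⟨z, hz2, hz1⟩
  · intro h
    rw [mem_closure_iff_nhds]
    intro U hU
    rw [nhds_pi, Filter.mem_pi] at hU
    obtain ⟨I, hIfin, tt, htt, hsub⟩ := hU
    obtain ⟨L, hL⟩ : ∃ L : ℕ, ∀ i ∈ I, i < L := by
      obtain ⟨L0, hL0⟩ := hIfin.bddAbove
      exact ⟨L0 + 1, fun i hi => Nat.lt_succ_of_le (hL0 hi)⟩
    obtain ⟨z, hzS, hz⟩ := h L
    refine ⟨z, hsub fun i hi => ?_, hzS⟩
    rw [hz i (hL i hi)]
    exact mem_of_mem_nhds (htt i)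

lemma continuous_shift : Continuous (shift : (ℕ → Bool) → (ℕ → Bool)) :=
  continuous_pi fun n => continuous_apply (n + 1)

def gen (C : Finset (List Bool)) : Set (ℕ → Bool) :=
  {x | ∃ (b : ℕ → List Bool) (k : ℕ), (∀ i, b i ∈ C) ∧ x = shift^[k] (concatSeq b)}

lemma codedShift_eq (C : Finset (List Bool)) : codedShift C = closure (gen C) := rfl

lemma shift_mem_codedShift {C : Finset (List Bool)} {x : ℕ → Bool}
    (hx : x ∈ codedShift C) : shift x ∈ codedShift C := by
  rw [codedShift_eq] at *
  have h1 : shift '' gen C ⊆ gen C := by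
    rintro _ ⟨z, ⟨b, k, hb, rfl⟩, rfl⟩
    exact ⟨b, k + 1, hb, (Function.iterate_succ_apply' shift k (concatSeq b)).symm⟩
  have := image_closure_subset_closure_image (s := gen C) continuous_shift
    (Set.mem_image_of_mem shift hx)
  exact closure_mono h1 this

lemma codedShift_nonempty {C : Finset (List Bool)} (hC : C.Nonempty) :
    (codedShift C).Nonempty := by
  obtain ⟨b0, hb0⟩ := hC
  exact ⟨concatSeq fun _ => b0, subset_closure ⟨fun _ => b0, 0, fun _ => hb0, rfl⟩⟩


section Codes

variable {B : ℕ → Finset (List Bool)} {t : ℕ → ℕ} {τ : ℕ → List Bool}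

lemma B_mem_succ (hrec : ∀ n : ℕ, 1 ≤ n → (B (n + 1) : Set (List Bool)) =
      {w | ∃ bs : List (List Bool), bs.length = t n ∧ (∀ b ∈ bs, b ∈ B n) ∧
        w = bs.flatten ++ τ n}) {n : ℕ} (hn : 1 ≤ n) {w : List Bool} :
    w ∈ B (n+1) ↔ ∃ bs : List (List Bool), bs.length = t n ∧ (∀ b ∈ bs, b ∈ B n) ∧
      w = bs.flatten ++ τ n := by
  have := hrec n hn
  constructor
  · intro hw
    have : w ∈ (B (n+1) : Set (List Bool)) := hw
    rwa [hrec n hn] at this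
  · intro hw
    have : w ∈ (B (n+1) : Set (List Bool)) := by rw [hrec n hn]; exact hw
    exact this

lemma B_nonempty (hB1ne : (B 1).Nonempty)
    (hrec : ∀ n : ℕ, 1 ≤ n → (B (n + 1) : Set (List Bool)) =
      {w | ∃ bs : List (List Bool), bs.length = t n ∧ (∀ b ∈ bs, b ∈ B n) ∧
        w = bs.flatten ++ τ n}) :
    ∀ n : ℕ, 1 ≤ n → (B n).Nonempty := by
  intro n hn
  induction n with
  | zero => omega
  | succ n ih =>
      rcases Nat.eq_or_lt_of_le hn with h | h
      · simpa [← h] using hB1ne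
      · have hn1 : 1 ≤ n := by omega
        obtain ⟨b0, hb0⟩ := ih hn1
        refine ⟨(List.replicate (t n) b0).flatten ++ τ n, (B_mem_succ hrec hn1).2 ?_⟩
        exact ⟨List.replicate (t n) b0, List.length_replicate,
          fun b hb => (List.eq_of_mem_replicate hb) ▸ hb0, rfl⟩

lemma B_length (hB1words : ∀ w ∈ B 1, w ≠ []) (ht : ∀ n : ℕ, 1 ≤ n → 2 ≤ t n)
    (hrec : ∀ n : ℕ, 1 ≤ n → (B (n + 1) : Set (List Bool)) =
      {w | ∃ bs : List (List Bool), bs.length = t n ∧ (∀ b ∈ bs, b ∈ B n) ∧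
        w = bs.flatten ++ τ n}) :
    ∀ n : ℕ, 1 ≤ n → ∀ w ∈ B n, n ≤ w.length := by
  intro n hn
  induction n with
  | zero => omega
  | succ n ih =>
      intro w hw
      rcases Nat.eq_or_lt_of_le hn with h | h
      · have : w ≠ [] := hB1words w (by rwa [← h] at hw)
        have := List.length_pos_iff.2 this
        omega
      · have hn1 : 1 ≤ n := by omega
        obtain ⟨bs, hlen, hmem, rfl⟩ := (B_mem_succ hrec hn1).1 hw
        have hsum : bs.length • n ≤ (bs.map List.length).sum := by
          have := List.card_nsmul_le_sum (bs.map List.length) n (by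
            intro x hx
            obtain ⟨b, hb, rfl⟩ := List.mem_map.1 hx
            exact ih hn1 b (hmem b hb))
          simpa using this
        have h2 : 2 ≤ bs.length := hlen ▸ ht n hn1
        have : 2 * n ≤ (bs.map List.length).sum := by
          calc 2 * n ≤ bs.length * n := Nat.mul_le_mul_right n h2
          _ = bs.length • n := by rw [smul_eq_mul]
          _ ≤ _ := hsum
        rw [List.length_append, List.length_flatten]
        omega

lemma B_ne_nil (hB1words : ∀ w ∈ B 1, w ≠ []) (ht : ∀ n : ℕ, 1 ≤ n → 2 ≤ t n)
    (hrec : ∀ n : ℕ, 1 ≤ n → (B (n + 1) : Set (List Bool)) =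
      {w | ∃ bs : List (List Bool), bs.length = t n ∧ (∀ b ∈ bs, b ∈ B n) ∧
        w = bs.flatten ++ τ n}) :
    ∀ n : ℕ, 1 ≤ n → ∀ w ∈ B n, w ≠ [] := by
  intro n hn w hw h
  have := B_length hB1words ht hrec n hn w hw
  rw [h] at this
  simp at this
  omega

lemma tau_infix (hτ : ∀ n : ℕ, 1 ≤ n → ∃ l : List (List Bool), l.Perm (B n).toList ∧
      τ n = l.flatten) {n : ℕ} (hn : 1 ≤ n) {v : List Bool} (hv : v ∈ B n) :
    v <:+: τ n := by
  obtain ⟨l, hperm, hflat⟩ := hτ n hn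
  rw [hflat]
  exact List.infix_of_mem_flatten (hperm.mem_iff.2 (Finset.mem_toList.2 hv))

/-- every pair of B n words appears (as prefix) in some B (n+1) word -/
lemma pair_in_next (ht : ∀ n : ℕ, 1 ≤ n → 2 ≤ t n)
    (hrec : ∀ n : ℕ, 1 ≤ n → (B (n + 1) : Set (List Bool)) =
      {w | ∃ bs : List (List Bool), bs.length = t n ∧ (∀ b ∈ bs, b ∈ B n) ∧
        w = bs.flatten ++ τ n}) {n : ℕ} (hn : 1 ≤ n) {b b' : List Bool}
    (hb : b ∈ B n) (hb' : b' ∈ B n) :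
    ∃ v ∈ B (n+1), b ++ b' <:+: v := by
  refine ⟨(b :: b' :: List.replicate (t n - 2) b).flatten ++ τ n,
    (B_mem_succ hrec hn).2 ⟨_, ?_, ?_, rfl⟩, ?_⟩
  · simp only [List.length_cons, List.length_replicate]
    have := ht n hn; omega
  · intro c hc
    simp only [List.mem_cons] at hc
    rcases hc with rfl | rfl | hc
    · exact hb
    · exact hb'
    · exact (List.eq_of_mem_replicate hc) ▸ hb
  · refine ⟨[], (List.replicate (t n - 2) b).flatten ++ τ n, ?_⟩
    simp [List.append_assoc]

/-- every B (n+1) word is an infix of every B (n+2) word -/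
lemma succ_infix_succsucc (hτ : ∀ n : ℕ, 1 ≤ n → ∃ l : List (List Bool),
      l.Perm (B n).toList ∧ τ n = l.flatten)
    (hrec : ∀ n : ℕ, 1 ≤ n → (B (n + 1) : Set (List Bool)) =
      {w | ∃ bs : List (List Bool), bs.length = t n ∧ (∀ b ∈ bs, b ∈ B n) ∧
        w = bs.flatten ++ τ n}) {n : ℕ} (hn : 1 ≤ n) {v w : List Bool}
    (hv : v ∈ B (n+1)) (hw : w ∈ B (n+2)) : v <:+: w := by
  obtain ⟨bs, _, _, rfl⟩ := (B_mem_succ hrec (by omega : 1 ≤ n+1)).1 hw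
  exact ((tau_infix hτ (by omega) hv).trans (List.suffix_append _ _).isInfix)

/-- decomposition of a B (n+1) word into B n words -/
lemma B_decomp (hτ : ∀ n : ℕ, 1 ≤ n → ∃ l : List (List Bool),
      l.Perm (B n).toList ∧ τ n = l.flatten)
    (hrec : ∀ n : ℕ, 1 ≤ n → (B (n + 1) : Set (List Bool)) =
      {w | ∃ bs : List (List Bool), bs.length = t n ∧ (∀ b ∈ bs, b ∈ B n) ∧
        w = bs.flatten ++ τ n}) {n : ℕ} (hn : 1 ≤ n) {w : List Bool} (hw : w ∈ B (n+1)) :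
    ∃ cs : List (List Bool), (∀ c ∈ cs, c ∈ B n) ∧ w = cs.flatten := by
  obtain ⟨bs, _, hmem, rfl⟩ := (B_mem_succ hrec hn).1 hw
  obtain ⟨l, hperm, hflat⟩ := hτ n hn
  refine ⟨bs ++ l, ?_, by rw [List.flatten_append, hflat]⟩
  intro c hc
  rcases List.mem_append.1 hc with h | h
  · exact hmem c h
  · exact Finset.mem_toList.1 (hperm.mem_iff.1 h)

end Codes

lemma flatten_flatten (l : List (List (List Bool))) :
    l.flatten.flatten = (l.map List.flatten).flatten := by
  induction l with
  | nil => simp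
  | cons a l ih => simp [ih]

/-- nesting: if every C-word decomposes into D-words, the coded shifts are nested -/
lemma codedShift_mono {C D : Finset (List Bool)} (hD : D.Nonempty)
    (hDne : ∀ w ∈ D, w ≠ []) (hCne : ∀ w ∈ C, w ≠ [])
    (hdec : ∀ w ∈ C, ∃ cs : List (List Bool), (∀ c ∈ cs, c ∈ D) ∧ w = cs.flatten) :
    codedShift C ⊆ codedShift D := by
  rw [codedShift_eq, codedShift_eq]
  refine closure_minimal ?_ isClosed_closure
  rintro _ ⟨b, k, hb, rfl⟩
  choose cs hcs1 hcs2 using fun i => hdec (b i) (hb i)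
  obtain ⟨b0, hb0⟩ := hD
  rw [mem_closure_iff_agree]
  intro L
  set M := k + L with hM
  set ds : List (List Bool) := (List.ofFn fun i : Fin M => cs i).flatten with hds
  have hdsmem : ∀ d ∈ ds, d ∈ D := by
    intro d hd
    rw [hds, List.mem_flatten] at hd
    obtain ⟨l, hl, hdl⟩ := hd
    obtain ⟨i, rfl⟩ := List.mem_ofFn.1 hl
    exact hcs1 i d hdl
  set c : ℕ → List Bool := fun i => ds.getD i b0 with hc
  have hcmem : ∀ i, c i ∈ D := by
    intro i
    by_cases h : i < ds.length
    · rw [hc]; simp only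
      rw [List.getD_eq_getElem _ _ h]
      exact hdsmem _ (List.getElem_mem h)
    · rw [hc]; simp only
      rw [List.getD_eq_default _ _ (le_of_not_gt h)]
      exact hb0
  have hcne : ∀ i, c i ≠ [] := fun i => hDne _ (hcmem i)
  have hbne : ∀ i, b i ≠ [] := fun i => hCne _ (hb i)
  have hffc : ff c ds.length = ds.flatten := by
    unfold ff; congr 1
    apply List.ext_getElem (by simp)
    intro j h1 h2
    rw [List.getElem_ofFn]
    exact List.getD_eq_getElem ds b0 h2
  have hffb : ds.flatten = ff b M := by
    rw [hds, flatten_flatten, List.map_ofFn]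
    unfold ff; congr 1
    refine List.ofFn_inj.2 (funext fun i => ?_)
    show (cs (i : ℕ)).flatten = b (i : ℕ)
    exact (hcs2 i).symm
  have hlenM : M ≤ (ff b M).length := le_ff_length hbne M
  have hagree : ∀ j, j < M → concatSeq c j = concatSeq b j := by
    intro j hj
    have h2 : j < (ff b M).length := by omega
    have h1 : j < (ff c ds.length).length := by rw [hffc, hffb]; omega
    rw [concatSeq_eq hcne h1, concatSeq_eq hbne h2, hffc, hffb]
  refine ⟨shift^[k] (concatSeq c), ⟨c, k, hcmem, rfl⟩, ?_⟩
  intro i hi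
  rw [shift_iterate_apply, shift_iterate_apply]
  exact hagree (k + i) (by omega)

/-- every length-m window of a point of a coded shift (all of whose words have length
at least m) sits inside the concatenation of two code words -/
lemma window_infix {C : Finset (List Bool)} {m : ℕ} (hCne : ∀ w ∈ C, w ≠ [])
    (hlen : ∀ w ∈ C, m ≤ w.length) {x : ℕ → Bool} (hx : x ∈ codedShift C) (i : ℕ) :
    ∃ b ∈ C, ∃ b' ∈ C, extract x i m <:+: b ++ b' := by
  rw [codedShift_eq, mem_closure_iff_agree] at hx
  obtain ⟨z, ⟨w, k, hw, rfl⟩, hz⟩ := hx (i + m)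
  have hwne : ∀ j, w j ≠ [] := fun j => hCne _ (hw j)
  have h1 : extract x i m = extract (concatSeq w) (k + i) m := by
    rw [← extract_shift]
    exact (extract_eq_of_agree fun k' hk' => hz (i + k') (by omega)).symm
  set i' := k + i with hi'
  have hex : ∃ j, i' < (ff w (j+1)).length :=
    ⟨i', lt_of_lt_of_le (Nat.lt_succ_self i') (le_ff_length hwne _)⟩
  set j := Nat.find hex with hj
  have hub : i' < (ff w (j+1)).length := Nat.find_spec hex
  have hlb : (ff w j).length ≤ i' := by
    rcases Nat.eq_zero_or_pos j with h | h
    · rw [h, ff_zero]; simp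
    · have hmin := Nat.find_min hex (m := j - 1) (by omega)
      push_neg at hmin
      have hj1 : j - 1 + 1 = j := by omega
      rwa [hj1] at hmin
  have hm2 : m ≤ (w (j+1)).length := hlen _ (hw (j+1))
  have hub2 : i' + m ≤ (ff w (j+2)).length := by
    rw [show j+2 = (j+1)+1 from rfl, ff_succ, List.length_append]
    omega
  rw [h1, extract_concatSeq hwne hub2]
  have hsplit : ff w (j+2) = ff w j ++ (w j ++ w (j+1)) := by
    rw [show j+2 = (j+1)+1 from rfl, ff_succ, ff_succ, List.append_assoc]
  refine ⟨w j, hw j, w (j+1), hw (j+1), ?_⟩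
  rw [hsplit]
  obtain ⟨r, hr⟩ := Nat.exists_eq_add_of_le hlb
  rw [hr, List.drop_length_add_append]
  exact (List.take_prefix _ _).isInfix.trans (List.drop_suffix _ _).isInfix

/-- if `u` is an infix of every code word, then `u` occurs in every point of the
coded shift -/
lemma occurrence {C : Finset (List Bool)} (hCne : ∀ w ∈ C, w ≠ [])
    {u : List Bool} (hu : ∀ w ∈ C, u <:+: w) {y : ℕ → Bool}
    (hy : y ∈ codedShift C) : ∃ q, extract y q u.length = u := by
  set R := C.sup List.length with hR
  have hRle : ∀ w ∈ C, w.length ≤ R := fun w hw => Finset.le_sup hw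
  set m := u.length with hm
  rw [codedShift_eq, mem_closure_iff_agree] at hy
  obtain ⟨z, ⟨w, k, hw, rfl⟩, hz⟩ := hy (2*R + m)
  have hwne : ∀ j, w j ≠ [] := fun j => hCne _ (hw j)
  have hex : ∃ j, k ≤ (ff w j).length := ⟨k, le_ff_length hwne k⟩
  set j := Nat.find hex with hj
  have hjk : k ≤ (ff w j).length := Nat.find_spec hex
  have hjub : (ff w j).length ≤ k + R := by
    rcases Nat.eq_zero_or_pos j with h | h
    · rw [h, ff_zero]; simp
    · have hmin := Nat.find_min hex (m := j-1) (by omega)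
      push_neg at hmin
      have hsp : ff w j = ff w (j-1) ++ w (j-1) := by
        rw [← ff_succ]; congr 1; omega
      rw [hsp, List.length_append]
      have := hRle _ (hw (j-1))
      omega
  obtain ⟨a, c, hac⟩ := hu _ (hw j)
  set p := (ff w j).length + a.length with hp
  have hwj : a.length + m ≤ (w j).length := by
    rw [← hac]
    simp [hm]
  have hub : p + m ≤ (ff w (j+1)).length := by
    rw [ff_succ, List.length_append]; omega
  have hextract : extract (concatSeq w) p m = u := by
    rw [extract_concatSeq hwne hub, ff_succ, hp, List.drop_length_add_append]
    have : w j = a ++ (u ++ c) := by rw [← List.append_assoc, hac]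
    rw [this, List.drop_left, hm, List.take_left]
  have hkp : k ≤ p := le_trans hjk (Nat.le_add_right _ _)
  set q := p - k with hq
  have hqb : q + m ≤ 2*R + m := by
    have h1 : (w j).length ≤ R := hRle _ (hw j)
    omega
  refine ⟨q, ?_⟩
  have hzx : extract (shift^[k] (concatSeq w)) q m = extract (concatSeq w) p m := by
    rw [extract_shift]; congr 1; omega
  have hagree : extract y q m = extract (shift^[k] (concatSeq w)) q m :=
    extract_eq_of_agree fun k' hk' => (hz (q + k') (by omega)).symm
  rw [hagree, hzx, hextract]

end S16

/-- the intersection of the coded shifts generated by the recursively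
defined codes `B_n` is a minimal shift space. -/
theorem statement16 (B : ℕ → Finset (List Bool)) (t : ℕ → ℕ) (τ : ℕ → List Bool)
    (hB1ne : (B 1).Nonempty) (hB1words : ∀ w ∈ B 1, w ≠ [])
    (ht : ∀ n : ℕ, 1 ≤ n → 2 ≤ t n)
    (hτ : ∀ n : ℕ, 1 ≤ n → ∃ l : List (List Bool), l.Perm (B n).toList ∧ τ n = l.flatten)
    (hrec : ∀ n : ℕ, 1 ≤ n → (B (n + 1) : Set (List Bool)) =
      {w | ∃ bs : List (List Bool), bs.length = t n ∧ (∀ b ∈ bs, b ∈ B n) ∧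
        w = bs.flatten ++ τ n}) :
    MinimalShift (⋂ n : ℕ, codedShift (B (n + 1))) := by
  have hBne : ∀ n, 1 ≤ n → (B n).Nonempty := S16.B_nonempty hB1ne hrec
  have hBnil : ∀ n, 1 ≤ n → ∀ w ∈ B n, w ≠ [] := S16.B_ne_nil hB1words ht hrec
  have hBlen : ∀ n, 1 ≤ n → ∀ w ∈ B n, n ≤ w.length := S16.B_length hB1words ht hrec
  set X := ⋂ n : ℕ, codedShift (B (n + 1)) with hX
  have hXsub : ∀ n, 1 ≤ n → X ⊆ codedShift (B n) := by
    intro n hn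
    have := Set.iInter_subset (fun n => codedShift (B (n+1))) (n - 1)
    rwa [Nat.sub_add_cancel hn] at this
  have hnested : ∀ n : ℕ, codedShift (B (n+1+1)) ⊆ codedShift (B (n+1)) := fun n =>
    S16.codedShift_mono (hBne (n+1) (by omega)) (hBnil (n+1) (by omega))
      (hBnil (n+2) (by omega)) (fun w hw => S16.B_decomp hτ hrec (by omega) hw)
  have hclosed : ∀ n : ℕ, IsClosed (codedShift (B (n+1))) := fun n => isClosed_closure
  have hXne : X.Nonempty :=
    IsCompact.nonempty_iInter_of_sequence_nonempty_isCompact_isClosed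
      (fun n => codedShift (B (n+1))) hnested
      (fun n => S16.codedShift_nonempty (hBne (n+1) (by omega)))
      (hclosed 0).isCompact hclosed
  have hXclosed : IsClosed X := isClosed_iInter hclosed
  have hXinv : ∀ x ∈ X, shift x ∈ X := fun x hx =>
    Set.mem_iInter.2 fun n => S16.shift_mem_codedShift (Set.mem_iInter.1 hx n)
  refine ⟨⟨hXne, hXclosed, hXinv⟩, ?_⟩
  intro Y hY hYX
  refine Set.Subset.antisymm hYX ?_
  obtain ⟨y, hy⟩ := hY.1
  have horb : ∀ q, shift^[q] y ∈ Y := by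
    intro q
    induction q with
    | zero => exact hy
    | succ q ih => rw [Function.iterate_succ_apply']; exact hY.2.2 _ ih
  intro x hx
  have hxcl : x ∈ closure {z | ∃ q, z = shift^[q] y} := by
    rw [S16.mem_closure_iff_agree]
    intro L
    set n := max L 1 with hn
    have hn1 : 1 ≤ n := le_max_right _ _
    have hLn : L ≤ n := le_max_left _ _
    obtain ⟨b, hb, b', hb', hinf⟩ := S16.window_infix (hBnil n hn1)
      (fun w hw => hLn.trans (hBlen n hn1 w hw)) (hXsub n hn1 hx) 0
    have hu : ∀ w ∈ B (n+2), S16.extract x 0 L <:+: w := by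
      intro w hw
      obtain ⟨v, hv, hbv⟩ := S16.pair_in_next ht hrec hn1 hb hb'
      exact hinf.trans (hbv.trans (S16.succ_infix_succsucc hτ hrec hn1 hv hw))
    have hyX : y ∈ codedShift (B (n+2)) := hXsub (n+2) (by omega) (hYX hy)
    obtain ⟨q, hq⟩ := S16.occurrence (hBnil (n+2) (by omega)) hu hyX
    rw [S16.extract_length] at hq
    refine ⟨shift^[q] y, ⟨q, rfl⟩, fun i hi => ?_⟩
    rw [S16.shift_iterate_apply]
    have := congrFun (List.ofFn_inj.1 hq) ⟨i, hi⟩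
    simpa using this
  have hsub : closure {z | ∃ q, z = shift^[q] y} ⊆ Y := by
    rw [← hY.2.1.closure_eq]
    apply closure_mono
    rintro z ⟨q, rfl⟩
    exact horb q
  exact hsub hxcl


end DbarPaper
end

section
/- Let B_1 = {0, 11} and define inductively B_{n+1} = {b_1 b_2 ⋯ b_{t(n)} τ(n) : b_i ∈ B_n}, where τ(n) is the concatenation of all elements of B_n (in a fixed enumeration), and let X_n be the coded shift generated by B_n. Let s(n) and ℓ(n) denote the shortest and longest lengths of words in B_n. Let ε > 0 and suppose the sequence (t(n))_{n≥1} of integers t(n) ≥ 2 satisfies, for all n ≥ 1, t(n) > |τ(n)|/(2ℓ(n) − 3s(n)) and t(n) > 2^n(|τ(n)| + 3ℓ(n))/(s(n)·ε). Then Σ_{n=1}^∞ d̄^H(X_n, X_{n+1}) < ε. -/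
open MeasureTheory Filter Topology

namespace DbarPaper

variable {A : Type} [Fintype A] [DecidableEq A] [Inhabited A]
  [TopologicalSpace A] [DiscreteTopology A]
  [MeasurableSpace A] [MeasurableSingletonClass A]

/-- The length of a shortest word in `B`. -/
noncomputable def minLen (B : Finset (List Bool)) : ℕ :=
  sInf (List.length '' (B : Set (List Bool)))

/-- The length of a longest word in `B`. -/
noncomputable def maxLen (B : Finset (List Bool)) : ℕ :=
  sSup (List.length '' (B : Set (List Bool)))

set_option linter.unusedSectionVars false
set_option maxHeartbeats 1000000

def ham (x y : ℕ → A) (n : ℕ) : ℕ :=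
  ((Finset.range n).filter (fun j => x j ≠ y j)).card

lemma ham_le (x y : ℕ → A) (n : ℕ) : ham x y n ≤ n := by
  calc ham x y n ≤ (Finset.range n).card := Finset.card_filter_le _ _
  _ = n := Finset.card_range n

lemma dbar_eq_ham (x y : ℕ → A) :
    dbar x y = Filter.limsup (fun n => (ham x y n : ℝ) / (n : ℝ)) Filter.atTop := rfl

lemma ham_div_le_one (x y : ℕ → A) (n : ℕ) : (ham x y n : ℝ) / (n : ℝ) ≤ 1 := by
  rcases Nat.eq_zero_or_pos n with h | h
  · simp [h]
  · rw [div_le_one (by exact_mod_cast h)]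
    exact_mod_cast ham_le x y n

lemma ham_div_nonneg (x y : ℕ → A) (n : ℕ) : 0 ≤ (ham x y n : ℝ) / (n : ℝ) :=
  div_nonneg (by positivity) (by positivity)

lemma dbar_nonneg (x y : ℕ → A) : 0 ≤ dbar x y := by
  rw [dbar_eq_ham]
  apply Filter.le_limsup_of_frequently_le
  · exact Filter.Frequently.of_forall (fun n => ham_div_nonneg x y n)
  · exact Filter.isBoundedUnder_of ⟨1, fun n => ham_div_le_one x y n⟩

lemma dbar_self (x : ℕ → A) : dbar x x = 0 := by
  have h : (fun n => (((Finset.range n).filter (fun j => x j ≠ x j)).card : ℝ) / (n : ℝ))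
      = fun _ => (0:ℝ) := by
    funext n; simp
  rw [dbar, h, Filter.limsup_const]

lemma dbar_le_of_ham_le {x y : ℕ → A} {δ C : ℝ} (hδ : 0 ≤ δ)
    (h : ∀ n, (ham x y n : ℝ) ≤ δ * n + C) : dbar x y ≤ δ := by
  rw [dbar_eq_ham]
  have h1 : Filter.limsup (fun n => (ham x y n : ℝ) / (n : ℝ)) Filter.atTop ≤
      Filter.limsup (fun n : ℕ => δ + C / (n : ℝ)) Filter.atTop := by
    apply Filter.limsup_le_limsup
    · filter_upwards [Filter.eventually_gt_atTop 0] with n hn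
      have hn' : (0:ℝ) < n := by exact_mod_cast hn
      rw [div_le_iff₀ hn']
      calc (ham x y n : ℝ) ≤ δ * n + C := h n
      _ = (δ + C / n) * n := by field_simp
    · exact Filter.isCoboundedUnder_le_of_le _ (fun n => ham_div_nonneg x y n)
    · refine Filter.isBoundedUnder_of ⟨δ + |C|, fun n => ?_⟩
      have h2 : C / (n:ℝ) ≤ |C| := by
        rcases Nat.eq_zero_or_pos n with h0 | h0
        · simp [h0]
        · have hn' : (1:ℝ) ≤ n := by exact_mod_cast h0
          calc C / (n:ℝ) ≤ |C| / (n:ℝ) := by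
                gcongr
                · exact le_abs_self C
          _ ≤ |C| := div_le_self (abs_nonneg C) hn'
      simpa using h2
  have h2 : Filter.limsup (fun n : ℕ => δ + C / (n : ℝ)) Filter.atTop = δ := by
    have : Filter.Tendsto (fun n : ℕ => δ + C / (n : ℝ)) Filter.atTop (nhds δ) := by
      have := Filter.Tendsto.const_div_atTop (tendsto_natCast_atTop_atTop (R := ℝ)) C
      simpa using Filter.Tendsto.const_add δ this
    exact this.limsup_eq
  linarith

lemma ham_congr {x y x' y' : ℕ → A} {n : ℕ} (hx : ∀ i < n, x i = x' i)
    (hy : ∀ i < n, y i = y' i) : ham x y n = ham x' y' n := by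
  unfold ham
  congr 1
  apply Finset.filter_congr
  intro i hi
  rw [Finset.mem_range] at hi
  rw [hx i hi, hy i hi]

lemma ham_shift_le (x y : ℕ → A) (k n : ℕ) :
    ham (fun i => x (i + k)) (fun i => y (i + k)) n ≤ ham x y (n + k) := by
  unfold ham
  apply Finset.card_le_card_of_injOn (fun j => j + k)
  · intro j hj
    simp only [Finset.mem_coe, Finset.mem_filter, Finset.mem_range] at hj ⊢
    exact ⟨by omega, hj.2⟩
  · intro a _ b _ hab
    simpa using hab

lemma shift_iterate_apply (x : ℕ → A) (k n : ℕ) : (shift^[k] x) n = x (n + k) := by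
  induction k generalizing x with
  | zero => rfl
  | succ k ih =>
    rw [Function.iterate_succ_apply, ih (shift x)]
    rfl

/-- agreement on an initial window is an open condition -/
lemma isOpen_agree (x : ℕ → A) (n : ℕ) : IsOpen {z : ℕ → A | ∀ i < n, z i = x i} := by
  have : {z : ℕ → A | ∀ i < n, z i = x i} =
      ⋂ i ∈ Finset.range n, (fun z : ℕ → A => z i) ⁻¹' {x i} := by
    ext z; simp [Finset.mem_range]
  rw [this]
  apply isOpen_biInter_finset
  intro i _
  exact (continuous_apply i).isOpen_preimage _ (isOpen_discrete _)

lemma closure_transfer {S Y : Set (ℕ → A)} (hY : IsClosed Y) {δ C : ℝ}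
    (h : ∀ s ∈ S, ∃ y ∈ Y, ∀ n, (ham s y n : ℝ) ≤ δ * n + C) :
    ∀ x ∈ closure S, ∃ y ∈ Y, ∀ n, (ham x y n : ℝ) ≤ δ * n + C := by
  intro x hx
  have H : ∀ n : ℕ, ∃ s ∈ S, ∀ i < n, s i = x i := by
    intro n
    have hop : IsOpen {z : ℕ → A | ∀ i < n, z i = x i} := isOpen_agree x n
    have hmem : x ∈ {z : ℕ → A | ∀ i < n, z i = x i} := fun i _ => rfl
    obtain ⟨s, hs1, hs2⟩ := mem_closure_iff.mp hx _ hop hmem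
    exact ⟨s, hs2, hs1⟩
  choose sseq hsS hsagree using H
  choose yseq hyY hyham using fun n => h (sseq n) (hsS n)
  have hYc : IsCompact Y := hY.isCompact
  obtain ⟨y, hyY', φ, hφ, hconv⟩ := hYc.tendsto_subseq hyY
  refine ⟨y, hyY', fun n => ?_⟩
  have hnhd : ∀ᶠ z in nhds y, ∀ i < n, z i = y i :=
    Filter.eventually_of_mem ((isOpen_agree y n).mem_nhds (fun i _ => rfl)) (fun z hz => hz)
  have hev1 : ∀ᶠ k in Filter.atTop, ∀ i < n, (yseq (φ k)) i = y i := hconv.eventually hnhd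
  have hev2 : ∀ᶠ k in Filter.atTop, n ≤ φ k :=
    (hφ.tendsto_atTop).eventually_ge_atTop n
  obtain ⟨k, hk1, hk2⟩ := (hev1.and hev2).exists
  have e1 : ham x y n = ham (sseq (φ k)) (yseq (φ k)) n := by
    apply ham_congr
    · intro i hi; exact (hsagree (φ k) i (lt_of_lt_of_le hi hk2)).symm
    · intro i hi; exact (hk1 i hi).symm
  rw [e1]
  exact hyham (φ k) n

/-- the flattened concatenation of the first `K` words -/
def pre {α : Type*} (w : ℕ → List α) (K : ℕ) : List α :=
  (List.ofFn fun i : Fin K => w i).flatten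

lemma pre_zero {α : Type*} (w : ℕ → List α) : pre w 0 = [] := rfl

lemma pre_succ {α : Type*} (w : ℕ → List α) (K : ℕ) :
    pre w (K + 1) = pre w K ++ w K := by
  unfold pre
  rw [List.ofFn_succ']
  simp [List.flatten_concat]

lemma pre_add {α : Type*} (w : ℕ → List α) (a b : ℕ) :
    pre w (a + b) = pre w a ++ pre (fun i => w (a + i)) b := by
  induction b with
  | zero => simp [pre_zero]
  | succ b ih => rw [← Nat.add_assoc, pre_succ, ih, pre_succ, List.append_assoc]

lemma length_pre_ge {α : Type*} {w : ℕ → List α} (h : ∀ i, w i ≠ []) (K : ℕ) :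
    K ≤ (pre w K).length := by
  induction K with
  | zero => simp
  | succ K ih =>
    rw [pre_succ, List.length_append]
    have : 1 ≤ (w K).length := List.length_pos_iff.mpr (h K)
    omega

lemma pre_prefix {α : Type*} (w : ℕ → List α) {K K' : ℕ} (h : K ≤ K') :
    pre w K <+: pre w K' := by
  obtain ⟨b, rfl⟩ := Nat.exists_eq_add_of_le h
  rw [pre_add]
  exact List.prefix_append _ _

lemma getD_of_prefix {α : Type*} {l l' : List α} (h : l <+: l') {n : ℕ}
    (hn : n < l.length) (d : α) : l'.getD n d = l.getD n d := by
  obtain ⟨r, rfl⟩ := h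
  exact List.getD_append l r d n hn

/-- abstract version of `concatSeq` with arbitrary default -/
def cseq {α : Type*} (w : ℕ → List α) (d : α) : ℕ → α :=
  fun n => (pre w (n + 1)).getD n d

lemma cseq_eq_pre {α : Type*} {w : ℕ → List α} (h : ∀ i, w i ≠ []) {n K : ℕ}
    (hn : n < (pre w K).length) (d : α) : cseq w d n = (pre w K).getD n d := by
  unfold cseq
  rcases le_total (n + 1) K with hK | hK
  · exact (getD_of_prefix (pre_prefix w hK) (lt_of_lt_of_le (Nat.lt_succ_self n)
      (length_pre_ge h (n+1))) d).symm
  · exact getD_of_prefix (pre_prefix w hK) hn d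

lemma concatSeq_eq_cseq (w : ℕ → List A) : concatSeq w = cseq w default := rfl

lemma concatSeq_eq_pre {w : ℕ → List A} (h : ∀ i, w i ≠ []) {n K : ℕ}
    (hn : n < (pre w K).length) : concatSeq w n = (pre w K).getD n default :=
  cseq_eq_pre h hn default

lemma mem_of_mem_pre {α : Type*} {w : ℕ → List α} {K : ℕ} {x : α} (hx : x ∈ pre w K) :
    ∃ i, x ∈ w i := by
  unfold pre at hx
  rw [List.mem_flatten] at hx
  obtain ⟨l, hl, hxl⟩ := hx
  rw [List.mem_ofFn] at hl
  obtain ⟨i, rfl⟩ := hl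
  exact ⟨i, hxl⟩

section Reblock

variable {g : ℕ → List (List A)} (hg : ∀ i, g i ≠ []) (hne : ∀ i, ∀ l ∈ g i, l ≠ [])

include hg in
lemma wordStream_mem (n : ℕ) : ∃ i, cseq g [] n ∈ g i := by
  have hlen : n < (pre g (n+1)).length := lt_of_lt_of_le (Nat.lt_succ_self n) (length_pre_ge hg (n+1))
  have : cseq g [] n = (pre g (n+1)).getD n [] := rfl
  rw [this, List.getD_eq_getElem _ _ hlen]
  exact mem_of_mem_pre (List.getElem_mem hlen)

include hg hne in
lemma wordStream_ne (n : ℕ) : cseq g [] n ≠ [] := by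
  obtain ⟨i, hi⟩ := wordStream_mem hg n
  exact hne i _ hi

include hg in
lemma pre_wordStream (K : ℕ) :
    pre (cseq g []) ((pre g K).length) = (pre g K).flatten := by
  induction K with
  | zero => simp [pre_zero]
  | succ K ih =>
    rw [pre_succ, List.length_append, pre_add, ih, List.flatten_append]
    congr 1
    have hget : ∀ j (hj : j < (g K).length),
        cseq g [] ((pre g K).length + j) = (g K)[j] := by
      intro j hj
      have hlen : (pre g K).length + j < (pre g (K+1)).length := by
        rw [pre_succ, List.length_append]; omega
      rw [cseq_eq_pre hg hlen, pre_succ,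
        List.getD_append_right _ _ _ _ (by omega)]
      have : (pre g K).length + j - (pre g K).length = j := by omega
      rw [this, List.getD_eq_getElem _ _ hj]
    have : pre (fun i => cseq g [] ((pre g K).length + i)) (g K).length
        = (List.ofFn fun j : Fin (g K).length => (g K)[(j:ℕ)]).flatten := by
      unfold pre
      exact congrArg List.flatten (congrArg List.ofFn (funext fun j => hget j j.isLt))
    rw [this, List.ofFn_getElem]

include hg hne in
lemma concatSeq_reblock :
    concatSeq (cseq g []) = concatSeq (fun i => (g i).flatten) := by
  funext n
  set b : ℕ → List A := fun i => (g i).flatten with hb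
  have hbne : ∀ i, b i ≠ [] := by
    intro i
    obtain ⟨l, hl⟩ := List.exists_mem_of_ne_nil _ (hg i)
    simp only [hb, ne_eq, List.flatten_eq_nil_iff]
    push_neg
    exact ⟨l, hl, hne i l hl⟩
  have hpre : ∀ K, pre b K = (pre g K).flatten := by
    intro K
    unfold pre
    rw [show (List.ofFn fun i : Fin K => b i)
        = (List.ofFn fun i : Fin K => g i).map List.flatten from by
      rw [List.map_ofFn]; rfl, ← List.flatten_flatten]
  have hKlen : n < (pre b (n+1)).length :=
    lt_of_lt_of_le (Nat.lt_succ_self n) (length_pre_ge hbne (n+1))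
  have h1 : concatSeq b n = (pre b (n+1)).getD n default := concatSeq_eq_pre hbne hKlen
  have h2 : concatSeq (cseq g []) n = (pre (cseq g []) ((pre g (n+1)).length)).getD n default := by
    apply concatSeq_eq_pre (wordStream_ne hg hne)
    rw [pre_wordStream hg, ← hpre]
    exact hKlen
  rw [h1, h2, pre_wordStream hg, ← hpre]
end Reblock

lemma pre_one {α : Type*} (w : ℕ → List α) : pre w 1 = w 0 := by
  simp [pre]

lemma shift_concat {w : ℕ → List A} (hne : ∀ i, w i ≠ []) :
    shift^[(w 0).length] (concatSeq w) = concatSeq (fun i => w (1 + i)) := by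
  funext n
  have hne' : ∀ i, (fun i => w (1 + i)) i ≠ ([] : List A) := fun i => hne (1 + i)
  rw [shift_iterate_apply]
  have hlen : n + (w 0).length < (pre w (1 + (n+1))).length := by
    rw [pre_add, pre_one, List.length_append]
    have := length_pre_ge hne' (n+1)
    omega
  rw [concatSeq_eq_pre hne hlen, pre_add, pre_one,
    List.getD_append_right _ _ _ _ (by omega)]
  have hidx : n + (w 0).length - (w 0).length = n := by omega
  rw [hidx]
  have hlen' : n < (pre (fun i => w (1 + i)) (n+1)).length :=
    lt_of_lt_of_le (Nat.lt_succ_self n) (length_pre_ge hne' (n+1))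
  exact (concatSeq_eq_pre hne' hlen').symm

lemma shift_reduce {w : ℕ → List A} (hne : ∀ i, w i ≠ []) (k : ℕ) :
    ∃ j k', k' < (w j).length ∧
      shift^[k] (concatSeq w) = shift^[k'] (concatSeq (fun i => w (j + i))) := by
  induction k using Nat.strong_induction_on generalizing w with
  | _ k IH =>
    by_cases hk : k < (w 0).length
    · refine ⟨0, k, hk, ?_⟩
      congr 1
      exact congrArg concatSeq (funext fun i => by rw [Nat.zero_add])
    · push_neg at hk
      have hL : 1 ≤ (w 0).length := List.length_pos_iff.mpr (hne 0)
      set w₁ : ℕ → List A := fun i => w (1 + i) with hw₁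
      have hne₁ : ∀ i, w₁ i ≠ [] := fun i => hne (1 + i)
      obtain ⟨j', k', hk', heq⟩ := IH (k - (w 0).length) (by omega) hne₁
      refine ⟨1 + j', k', hk', ?_⟩
      have : k = (k - (w 0).length) + (w 0).length := by omega
      rw [this, Function.iterate_add_apply, shift_concat hne, heq]
      congr 1
      refine congrArg concatSeq (funext fun i => ?_)
      simp only [hw₁]
      congr 1
      omega

lemma codedShift_subset_of_decomp {B B' : Finset (List A)}
    (h : ∀ w ∈ B', ∃ l : List (List A), l ≠ [] ∧ (∀ u ∈ l, u ∈ B) ∧ l.flatten = w)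
    (hBne : ∀ u ∈ B, u ≠ []) : codedShift B' ⊆ codedShift B := by
  unfold codedShift
  apply closure_minimal ?_ isClosed_closure
  rintro x ⟨b, k, hb, rfl⟩
  choose D hD1 hD2 hD3 using h
  set g : ℕ → List (List A) := fun i => D (b i) (hb i) with hgdef
  have hg : ∀ i, g i ≠ [] := fun i => hD1 _ _
  have hne : ∀ i, ∀ l ∈ g i, l ≠ [] := fun i l hl => hBne l (hD2 _ _ l hl)
  apply subset_closure
  refine ⟨cseq g [], k, fun i => ?_, ?_⟩
  · obtain ⟨i', hi'⟩ := wordStream_mem hg i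
    exact hD2 _ _ _ hi'
  · refine congrArg (shift^[k]) ?_ |>.symm
    rw [concatSeq_reblock hg hne]
    exact congrArg concatSeq (funext fun i => hD3 _ _)

/-- sum of lengths of `r` consecutive words starting at `a` -/
def csum {α : Type*} (b : ℕ → List α) (a r : ℕ) : ℕ :=
  (pre (fun i => b (a + i)) r).length

lemma csum_zero {α : Type*} (b : ℕ → List α) (a : ℕ) : csum b a 0 = 0 := rfl

lemma csum_succ {α : Type*} (b : ℕ → List α) (a r : ℕ) :
    csum b a (r + 1) = csum b a r + (b (a + r)).length := by
  unfold csum; rw [pre_succ, List.length_append]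

lemma csum_add {α : Type*} (b : ℕ → List α) (a p q : ℕ) :
    csum b a (p + q) = csum b a p + csum b (a + p) q := by
  unfold csum
  rw [pre_add, List.length_append]
  congr 2
  exact congrArg (fun f => pre f q) (funext fun i => by congr 1; omega)

lemma csum_eq_length_pre {α : Type*} (b : ℕ → List α) (K : ℕ) :
    csum b 0 K = (pre b K).length := by
  unfold csum
  congr 1
  exact congrArg (fun f => pre f K) (funext fun i => by rw [Nat.zero_add])

lemma csum_ge {α : Type*} {b : ℕ → List α} {s : ℕ} (h : ∀ i, s ≤ (b i).length)
    (a r : ℕ) : r * s ≤ csum b a r := by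
  induction r with
  | zero => simp [csum_zero]
  | succ r ih =>
    rw [csum_succ, Nat.succ_mul]
    have := h (a + r)
    omega

lemma csum_le {α : Type*} {b : ℕ → List α} {ℓ : ℕ} (h : ∀ i, (b i).length ≤ ℓ)
    (a r : ℕ) : csum b a r ≤ r * ℓ := by
  induction r with
  | zero => simp [csum_zero]
  | succ r ih =>
    rw [csum_succ, Nat.succ_mul]
    have := h (a + r)
    omega

lemma exists_greedy {α : Type*} {b : ℕ → List α} {ℓ : ℕ}
    (hlow : ∀ i, 1 ≤ (b i).length) (hup : ∀ i, (b i).length ≤ ℓ)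
    (a T : ℕ) (hT : 1 ≤ T) :
    ∃ r, T ≤ csum b a r ∧ csum b a r < T + ℓ := by
  have hex : ∃ r, T ≤ csum b a r := by
    refine ⟨T, ?_⟩
    have := csum_ge hlow a T
    omega
  classical
  set r₀ := Nat.find hex with hr₀
  have h1 : T ≤ csum b a r₀ := Nat.find_spec hex
  have hpos : r₀ ≠ 0 := by
    intro h0
    rw [h0] at h1
    rw [csum_zero] at h1
    omega
  obtain ⟨r₁, hr₁⟩ := Nat.exists_eq_succ_of_ne_zero hpos
  have h2 : csum b a r₁ < T := by
    by_contra hcon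
    push_neg at hcon
    have := Nat.find_min hex (m := r₁) (by omega)
    exact this hcon
  refine ⟨r₀, h1, ?_⟩
  rw [hr₁, csum_succ]
  have := hup (a + r₁)
  omega

/-- three words of prescribed total length from a length-full family -/
lemma exists_three_words {W : Finset (List A)} {s ℓ : ℕ}
    (hfull : ∀ L, s ≤ L → L ≤ ℓ → ∃ u ∈ W, u.length = L)
    (hsl : s ≤ ℓ) {v : ℕ} (h3s : 3 * s ≤ v) (h3l : v ≤ 3 * ℓ) :
    ∃ u1 u2 u3, u1 ∈ W ∧ u2 ∈ W ∧ u3 ∈ W ∧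
      u1.length + u2.length + u3.length = v := by
  set a1 := min ℓ (v - 2 * s) with ha1
  set a2 := min ℓ (v - a1 - s) with ha2
  set a3 := v - a1 - a2 with ha3
  obtain ⟨u1, hu1, hl1⟩ := hfull a1 (by omega) (by omega)
  obtain ⟨u2, hu2, hl2⟩ := hfull a2 (by omega) (by omega)
  obtain ⟨u3, hu3, hl3⟩ := hfull a3 (by omega) (by omega)
  exact ⟨u1, u2, u3, hu1, hu2, hu3, by omega⟩

lemma block_approx {W B₂ : Finset (List A)} {τ : List A} {t s ℓ : ℕ}
    (hfull : ∀ L, s ≤ L → L ≤ ℓ → ∃ u ∈ W, u.length = L)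
    (hWlen : ∀ u ∈ W, s ≤ u.length ∧ u.length ≤ ℓ)
    (hs1 : 1 ≤ s) (h23 : 3 * s + 1 ≤ 2 * ℓ) (ht : 3 ≤ t)
    (hB2 : ∀ bs : List (List A), bs.length = t → (∀ u ∈ bs, u ∈ W) →
      bs.flatten ++ τ ∈ B₂)
    (b : ℕ → List A) (hb : ∀ i, b i ∈ W) :
    ∃ B' : ℕ → List A, (∀ J, B' J ∈ B₂) ∧
      ∀ n, ham (concatSeq b) (concatSeq B') n ≤
        (n / (t * s + τ.length) + 1) * (τ.length + 3 * ℓ) := by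
  classical
  have hsl : s ≤ ℓ := by omega
  have hblow : ∀ i, s ≤ (b i).length := fun i => (hWlen _ (hb i)).1
  have hbup : ∀ i, (b i).length ≤ ℓ := fun i => (hWlen _ (hb i)).2
  have hlow1 : ∀ i, 1 ≤ (b i).length := fun i => le_trans hs1 (hblow i)
  have hbne : ∀ i, b i ≠ [] := fun i => by
    have := hlow1 i
    exact List.ne_nil_of_length_pos (by omega)
  -- greedy consumption
  choose rf hrf1 hrf2 using fun a => exists_greedy hlow1 hbup a (3 * s + τ.length) (by omega)
  set T3 := t - 3 with hT3
  set v : ℕ → ℕ := fun a => csum b (a + T3) (rf (a + T3)) - τ.length with hvdef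
  have hv1 : ∀ a, 3 * s ≤ v a := fun a => by
    have := hrf1 (a + T3); simp only [hvdef]; omega
  have hv2 : ∀ a, v a ≤ 3 * ℓ := fun a => by
    have := hrf2 (a + T3); simp only [hvdef]; omega
  have hvτ : ∀ a, v a + τ.length = csum b (a + T3) (rf (a + T3)) := fun a => by
    have := hrf1 (a + T3); simp only [hvdef]; omega
  -- fill words
  choose w1 w2 w3 hw1 hw2 hw3 hwsum using
    fun a => exists_three_words hfull hsl (hv1 a) (hv2 a)
  -- block data
  set blockWords : ℕ → List (List A) :=
    (fun a => (List.ofFn fun i : Fin T3 => b (a + i)) ++ [w1 a, w2 a, w3 a]) with hbwdef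
  set Bw : ℕ → List A := (fun a => (blockWords a).flatten ++ τ) with hBwdef
  set kept : ℕ → List A := (fun a => pre (fun i => b (a + i)) T3) with hkeptdef
  set bc : ℕ → ℕ := (fun a => T3 + rf (a + T3)) with hbcdef
  have hkl : ∀ a, (kept a).length = csum b a T3 := fun a => rfl
  set qtail : ℕ → List A := (fun a => ([w1 a, w2 a, w3 a] : List (List A)).flatten ++ τ)
    with hqdef
  have hBwsplit : ∀ a, Bw a = kept a ++ qtail a := by
    intro a
    simp only [hBwdef, hbwdef, hkeptdef, hqdef, List.flatten_append, List.append_assoc]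
    rfl
  have hqlen : ∀ a, (qtail a).length = v a + τ.length := by
    intro a
    simp only [hqdef, List.length_append]
    have := hwsum a
    simp [List.flatten]
    omega
  have hBwlen : ∀ a, (Bw a).length = csum b a (bc a) := by
    intro a
    rw [hBwsplit a, List.length_append, hkl, hqlen, hvτ]
    simp only [hbcdef]
    rw [csum_add]
  have hBwmem : ∀ a, Bw a ∈ B₂ := by
    intro a
    apply hB2
    · simp only [hbwdef, List.length_append, List.length_ofFn]
      simp; omega
    · intro u hu
      simp only [hbwdef, List.mem_append] at hu
      rcases hu with hu | hu
      · rw [List.mem_ofFn] at hu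
        obtain ⟨i, rfl⟩ := hu
        exact hb _
      · simp only [List.mem_cons, List.mem_singleton] at hu
        rcases hu with rfl | rfl | rfl | h
        · exact hw1 a
        · exact hw2 a
        · exact hw3 a
        · exact absurd h List.not_mem_nil
  have hBwlb : ∀ a, t * s + τ.length ≤ (Bw a).length := by
    intro a
    rw [hBwsplit a, List.length_append, hkl, hqlen]
    have h1 := csum_ge hblow a T3
    have h2 := hv1 a
    have : T3 * s + 3 * s = t * s := by
      simp only [hT3]
      have : t - 3 + 3 = t := by omega
      calc (t-3) * s + 3 * s = ((t-3) + 3) * s := by ring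
      _ = t * s := by rw [this]
    omega
  have hBwne : ∀ a, Bw a ≠ [] := by
    intro a
    apply List.ne_nil_of_length_pos
    have := hBwlb a
    have : 1 ≤ t * s := by
      have : 3 * 1 ≤ t * s := Nat.mul_le_mul ht hs1
      omega
    omega
  have htext : ∀ a, pre (fun i => b (a + i)) (bc a) =
      kept a ++ pre (fun i => b (a + T3 + i)) (rf (a + T3)) := by
    intro a
    simp only [hbcdef, hkeptdef]
    rw [pre_add]
    congr 1
    exact congrArg (fun f => pre f (rf (a + T3))) (funext fun i => by congr 1; omega)
  -- the block sequence
  set R : ℕ → ℕ := (fun J => Nat.rec 0 (fun _ acc => acc + bc acc) J) with hRdef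
  have hR0 : R 0 = 0 := rfl
  have hRS : ∀ J, R (J + 1) = R J + bc (R J) := fun J => rfl
  set B' : ℕ → List A := (fun J => Bw (R J)) with hB'def
  have hB'ne : ∀ J, B' J ≠ [] := fun J => hBwne (R J)
  refine ⟨B', fun J => hBwmem (R J), ?_⟩
  set D := t * s + τ.length with hDdef
  set E := τ.length + 3 * ℓ with hEdef
  have hD1 : 1 ≤ D := by
    have : 3 * 1 ≤ t * s := Nat.mul_le_mul ht hs1
    simp only [hDdef]; omega
  -- positions
  have hpreB' : ∀ J, (pre B' J).length = csum b 0 (R J) := by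
    intro J
    induction J with
    | zero => rw [hR0, pre_zero, csum_zero]; rfl
    | succ J ih =>
      rw [pre_succ, List.length_append, ih, hRS, csum_add, hB'def, hBwlen]
      simp only [Nat.zero_add]
  have hSlb : ∀ J, J * D ≤ csum b 0 (R J) := by
    intro J
    induction J with
    | zero => simp [hR0, csum_zero]
    | succ J ih =>
      rw [hRS, csum_add, Nat.succ_mul]
      simp only [Nat.zero_add]
      have h1 := hBwlb (R J)
      rw [hBwlen] at h1
      simp only [hDdef]
      simp only [hDdef] at ih
      omega
  have hklelen : ∀ a, (kept a).length + (qtail a).length = (Bw a).length := by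
    intro a
    rw [hBwsplit a]
    conv_rhs => rw [List.length_append]
  -- agreement on kept prefixes
  have hagree : ∀ J p, csum b 0 (R J) ≤ p →
      p < csum b 0 (R J) + (kept (R J)).length →
      concatSeq b p = concatSeq B' p := by
    intro J p hp1 hp2
    have hple : p < csum b 0 (R (J + 1)) := by
      rw [hRS, csum_add]
      simp only [Nat.zero_add]
      have := hklelen (R J)
      rw [hBwlen] at this
      omega
    have hlenb : p < (pre b (R (J + 1))).length := by
      rw [← csum_eq_length_pre]; exact hple
    have hlenB' : p < (pre B' (J + 1)).length := by
      rw [hpreB']; exact hple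
    rw [concatSeq_eq_pre hbne hlenb, concatSeq_eq_pre hB'ne hlenB']
    have e1 : pre b (R (J + 1)) = pre b (R J) ++ pre (fun i => b (R J + i)) (bc (R J)) := by
      rw [hRS, pre_add]
    have e2 : pre B' (J + 1) = pre B' J ++ Bw (R J) := pre_succ B' J
    rw [e1, e2]
    have hlb : (pre b (R J)).length = csum b 0 (R J) := (csum_eq_length_pre b (R J)).symm
    have hlB : (pre B' J).length = csum b 0 (R J) := hpreB' J
    rw [List.getD_append_right _ _ _ _ (by omega), List.getD_append_right _ _ _ _ (by omega),
      hlb, hlB, htext, hBwsplit]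
    have hidx : p - csum b 0 (R J) < (kept (R J)).length := by omega
    rw [List.getD_append _ _ _ _ hidx, List.getD_append _ _ _ _ hidx]
  -- locating mismatches
  have hloc : ∀ p, concatSeq b p ≠ concatSeq B' p →
      ∃ J, csum b 0 (R J) + (kept (R J)).length ≤ p ∧
        p < csum b 0 (R (J + 1)) ∧ J * D ≤ p := by
    intro p hp
    have hex : ∃ J, p < csum b 0 (R (J + 1)) := by
      refine ⟨p, ?_⟩
      have h1 := hSlb (p + 1)
      have : p + 1 ≤ (p + 1) * D := Nat.le_mul_of_pos_right _ (by omega)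
      omega
    set J₀ := Nat.find hex with hJ₀
    have hspec : p < csum b 0 (R (J₀ + 1)) := Nat.find_spec hex
    have hSJ : csum b 0 (R J₀) ≤ p := by
      rcases Nat.eq_zero_or_pos J₀ with h0 | h0
      · rw [h0, hR0, csum_zero]; omega
      · have hlt : J₀ - 1 < J₀ := by omega
        have hmin := Nat.find_min hex hlt
        push_neg at hmin
        have heq : (J₀ - 1) + 1 = J₀ := by omega
        rw [heq] at hmin
        exact hmin
    refine ⟨J₀, ?_, hspec, le_trans (hSlb J₀) hSJ⟩
    by_contra hcon
    push_neg at hcon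
    exact hp (hagree J₀ p hSJ hcon)
  -- counting
  intro n
  have hsubset : (Finset.range n).filter
      (fun j => concatSeq b j ≠ concatSeq B' j) ⊆
      (Finset.range (n / D + 1)).biUnion
        (fun J => Finset.Ico (csum b 0 (R J) + (kept (R J)).length) (csum b 0 (R (J + 1)))) := by
    intro p hp
    rw [Finset.mem_filter, Finset.mem_range] at hp
    obtain ⟨J, hJ1, hJ2, hJ3⟩ := hloc p hp.2
    rw [Finset.mem_biUnion]
    refine ⟨J, ?_, Finset.mem_Ico.mpr ⟨hJ1, hJ2⟩⟩
    rw [Finset.mem_range]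
    have : J ≤ n / D := (Nat.le_div_iff_mul_le (by omega)).mpr (by omega)
    omega
  calc ham (concatSeq b) (concatSeq B') n
      ≤ ((Finset.range (n / D + 1)).biUnion
        (fun J => Finset.Ico (csum b 0 (R J) + (kept (R J)).length)
          (csum b 0 (R (J + 1))))).card := Finset.card_le_card hsubset
    _ ≤ ∑ J ∈ Finset.range (n / D + 1),
        (Finset.Ico (csum b 0 (R J) + (kept (R J)).length) (csum b 0 (R (J + 1)))).card :=
        Finset.card_biUnion_le
    _ ≤ ∑ _J ∈ Finset.range (n / D + 1), E := by
        apply Finset.sum_le_sum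
        intro J _
        rw [Nat.card_Ico]
        have h1 : csum b 0 (R (J+1)) = csum b 0 (R J) + (Bw (R J)).length := by
          rw [hRS, csum_add, hBwlen]
          simp only [Nat.zero_add]
        have h2 := hklelen (R J)
        have h3 := hqlen (R J)
        have h4 := hv2 (R J)
        simp only [hEdef]
        omega
    _ = (n / D + 1) * E := by
        rw [Finset.sum_const, Finset.card_range, smul_eq_mul]

lemma hausdist_dbar_nonneg (P Q : Set (ℕ → A)) : 0 ≤ hausdist dbar P Q := by
  unfold hausdist
  apply le_max_of_le_left
  exact Real.iSup_nonneg fun p => Real.iInf_nonneg fun q => dbar_nonneg _ _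

lemma hausdist_dbar_le {P Q : Set (ℕ → A)} {δ : ℝ} (hδ : 0 ≤ δ)
    (h1 : ∀ p ∈ P, ∃ q ∈ Q, dbar p q ≤ δ) (h2 : Q ⊆ P) :
    hausdist dbar P Q ≤ δ := by
  unfold hausdist
  apply max_le
  · apply Real.iSup_le _ hδ
    intro p
    obtain ⟨q, hqQ, hd⟩ := h1 p p.2
    have bdd : BddBelow (Set.range fun q : Q => dbar (p : ℕ → A) q) := by
      refine ⟨0, ?_⟩
      rintro _ ⟨q, rfl⟩
      exact dbar_nonneg _ _
    exact ciInf_le_of_le bdd ⟨q, hqQ⟩ hd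
  · apply Real.iSup_le _ hδ
    intro q
    have bdd : BddBelow (Set.range fun p : P => dbar (p : ℕ → A) q) := by
      refine ⟨0, ?_⟩
      rintro _ ⟨p, rfl⟩
      exact dbar_nonneg _ _
    refine ciInf_le_of_le bdd ⟨(q : ℕ → A), h2 q.2⟩ ?_
    rw [dbar_self]
    exact hδ

lemma step_approx {W B₂ : Finset (List A)} {τ : List A} {t s ℓ : ℕ}
    (hfull : ∀ L, s ≤ L → L ≤ ℓ → ∃ u ∈ W, u.length = L)
    (hWlen : ∀ u ∈ W, s ≤ u.length ∧ u.length ≤ ℓ)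
    (hs1 : 1 ≤ s) (h23 : 3 * s + 1 ≤ 2 * ℓ) (ht : 3 ≤ t)
    (hB2 : ∀ bs : List (List A), bs.length = t → (∀ u ∈ bs, u ∈ W) →
      bs.flatten ++ τ ∈ B₂) :
    ∀ x ∈ codedShift W, ∃ y ∈ codedShift B₂,
      dbar x y ≤ ((τ.length : ℝ) + 3 * ℓ) / ((t : ℝ) * s) := by
  classical
  set E : ℕ := τ.length + 3 * ℓ with hEdef
  set D : ℕ := t * s + τ.length with hDdef
  have hts : 0 < t * s := by
    have : 3 * 1 ≤ t * s := Nat.mul_le_mul ht hs1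
    omega
  have htsR : (0:ℝ) < (t : ℝ) * s := by
    have := hts
    exact_mod_cast this
  set δ : ℝ := ((τ.length : ℝ) + 3 * ℓ) / ((t : ℝ) * s) with hδdef
  have hδ0 : 0 ≤ δ := by
    apply div_nonneg _ (le_of_lt htsR)
    positivity
  set C : ℝ := δ * ℓ + ((τ.length : ℝ) + 3 * ℓ) with hCdef
  -- key cast estimate
  have key : ∀ m k' : ℕ, k' ≤ ℓ → ((((m + k') / D + 1) * E : ℕ) : ℝ) ≤ δ * m + C := by
    intro m k' hk'
    have h1 : (((m + k') / D : ℕ) : ℝ) ≤ ((m : ℝ) + ℓ) / ((t:ℝ) * s) := by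
      calc (((m + k') / D : ℕ) : ℝ) ≤ ((m + k' : ℕ) : ℝ) / (D : ℝ) := Nat.cast_div_le
      _ ≤ ((m : ℝ) + ℓ) / ((t:ℝ) * s) := by
          apply div_le_div₀
          · positivity
          · push_cast
            have : (k' : ℝ) ≤ (ℓ : ℝ) := by exact_mod_cast hk'
            linarith
          · exact htsR
          · simp only [hDdef]
            push_cast
            nlinarith [Nat.cast_nonneg (α := ℝ) τ.length]
    have hE0 : (0:ℝ) ≤ (E : ℕ) := Nat.cast_nonneg E
    have hEδ : ((E : ℕ) : ℝ) = δ * ((t:ℝ) * s) := by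
      simp only [hEdef, hδdef]
      push_cast
      field_simp
    calc ((((m + k') / D + 1) * E : ℕ) : ℝ)
        = (((m + k') / D : ℕ) : ℝ) * (E : ℕ) + (E : ℕ) := by push_cast; ring
      _ ≤ (((m : ℝ) + ℓ) / ((t:ℝ) * s)) * (E : ℕ) + (E : ℕ) := by
          apply add_le_add_left
          exact mul_le_mul_of_nonneg_right h1 hE0
      _ = δ * m + C := by
          rw [hEδ]
          simp only [hCdef, hδdef]
          have ht0 : (t:ℝ) ≠ 0 := by positivity
          have hs0 : (s:ℝ) ≠ 0 := by
            have : (0:ℝ) < s := by exact_mod_cast hs1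
            positivity
          field_simp
          ring
  -- generator-level approximation
  have hgen : ∀ x ∈ {x : ℕ → A | ∃ (b : ℕ → List A) (k : ℕ),
      (∀ i, b i ∈ W) ∧ x = shift^[k] (concatSeq b)},
      ∃ y ∈ codedShift B₂, ∀ n, (ham x y n : ℝ) ≤ δ * n + C := by
    rintro x ⟨b, k, hb, rfl⟩
    have hbne : ∀ i, b i ≠ [] := fun i => by
      have := (hWlen _ (hb i)).1
      exact List.ne_nil_of_length_pos (by omega)
    obtain ⟨j, k', hk', heq⟩ := shift_reduce hbne k
    have hk'ℓ : k' ≤ ℓ := by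
      have := (hWlen _ (hb j)).2
      omega
    set b₂ : ℕ → List A := fun i => b (j + i) with hb₂def
    have hb₂ : ∀ i, b₂ i ∈ W := fun i => hb (j + i)
    obtain ⟨B', hB'mem, hham⟩ := block_approx hfull hWlen hs1 h23 ht hB2 b₂ hb₂
    refine ⟨shift^[k'] (concatSeq B'), subset_closure ⟨B', k', hB'mem, rfl⟩, fun n => ?_⟩
    rw [heq]
    have hx : shift^[k'] (concatSeq b₂) = fun i => concatSeq b₂ (i + k') :=
      funext fun i => shift_iterate_apply _ _ _
    have hy : shift^[k'] (concatSeq B') = fun i => concatSeq B' (i + k') :=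
      funext fun i => shift_iterate_apply _ _ _
    rw [hx, hy]
    have hle1 : ham (fun i => concatSeq b₂ (i + k')) (fun i => concatSeq B' (i + k')) n
        ≤ ham (concatSeq b₂) (concatSeq B') (n + k') := ham_shift_le _ _ _ _
    have hle2 := hham (n + k')
    have : ham (fun i => concatSeq b₂ (i + k')) (fun i => concatSeq B' (i + k')) n
        ≤ ((n + k') / D + 1) * E := le_trans hle1 hle2
    calc (ham (fun i => concatSeq b₂ (i + k')) (fun i => concatSeq B' (i + k')) n : ℝ)
        ≤ ((((n + k') / D + 1) * E : ℕ) : ℝ) := by exact_mod_cast this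
      _ ≤ δ * n + C := key n k' hk'ℓ
  -- pass to the closure
  intro x hx
  obtain ⟨y, hy, hb⟩ := closure_transfer (isClosed_closure) hgen x hx
  exact ⟨y, hy, dbar_le_of_ham_le hδ0 hb⟩

lemma minLen_le {B : Finset (List Bool)} {u : List Bool} (hu : u ∈ B) :
    minLen B ≤ u.length :=
  Nat.sInf_le ⟨u, hu, rfl⟩

lemma le_maxLen {B : Finset (List Bool)} {u : List Bool} (hu : u ∈ B) :
    u.length ≤ maxLen B :=
  le_csSup ((B.finite_toSet.image _).bddAbove) ⟨u, hu, rfl⟩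

lemma exists_mem_minLen {B : Finset (List Bool)} (hB : B.Nonempty) :
    ∃ u ∈ B, u.length = minLen B := by
  have hne : (List.length '' (B : Set (List Bool))).Nonempty := by
    obtain ⟨u, hu⟩ := hB
    exact ⟨u.length, u, hu, rfl⟩
  obtain ⟨u, hu, h⟩ := Nat.sInf_mem hne
  exact ⟨u, hu, h⟩

lemma exists_mem_maxLen {B : Finset (List Bool)} (hB : B.Nonempty) :
    ∃ u ∈ B, u.length = maxLen B := by
  have hne : (List.length '' (B : Set (List Bool))).Nonempty := by
    obtain ⟨u, hu⟩ := hB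
    exact ⟨u.length, u, hu, rfl⟩
  have hfin : (List.length '' (B : Set (List Bool))).Finite := B.finite_toSet.image _
  obtain ⟨u, hu, h⟩ := hne.csSup_mem hfin
  exact ⟨u, hu, h⟩

lemma sum_map_length_bounds {s ℓ : ℕ} :
    ∀ bs : List (List Bool), (∀ u ∈ bs, s ≤ u.length ∧ u.length ≤ ℓ) →
      bs.length * s ≤ (bs.map List.length).sum ∧
      (bs.map List.length).sum ≤ bs.length * ℓ := by
  intro bs
  induction bs with
  | nil => intro _; simp
  | cons u bs ih =>
    intro h
    have h1 := h u List.mem_cons_self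
    have h2 := ih (fun v hv => h v (List.mem_cons_of_mem u hv))
    simp only [List.map_cons, List.sum_cons, List.length_cons]
    constructor
    · calc (bs.length + 1) * s = s + bs.length * s := by ring
      _ ≤ u.length + (bs.map List.length).sum := by omega
    · calc u.length + (bs.map List.length).sum ≤ ℓ + bs.length * ℓ := by omega
      _ = (bs.length + 1) * ℓ := by ring

lemma exists_list_of_sum {W : Finset (List Bool)} {s ℓ : ℕ}
    (hfull : ∀ L, s ≤ L → L ≤ ℓ → ∃ u ∈ W, u.length = L) (hsl : s ≤ ℓ) :
    ∀ t L, t * s ≤ L → L ≤ t * ℓ →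
      ∃ bs : List (List Bool), bs.length = t ∧ (∀ u ∈ bs, u ∈ W) ∧
        (bs.map List.length).sum = L := by
  intro t
  induction t with
  | zero =>
    intro L h1 h2
    refine ⟨[], rfl, by simp, ?_⟩
    simp at h2 ⊢
    omega
  | succ t ih =>
    intro L h1 h2
    set a := max s (L - t * ℓ) with ha
    have has : s ≤ a := le_max_left _ _
    have hal : a ≤ ℓ := by
      apply max_le hsl
      have : L ≤ t * ℓ + ℓ := by
        calc L ≤ (t+1) * ℓ := h2
        _ = t * ℓ + ℓ := by ring
      omega
    have htl : t * s ≤ t * ℓ := Nat.mul_le_mul_left _ hsl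
    have hL1 : t * s ≤ L - a := by
      have : (t+1) * s = t * s + s := by ring
      omega
    have hL2 : L - a ≤ t * ℓ := by omega
    obtain ⟨u, hu, hul⟩ := hfull a has hal
    obtain ⟨bs, hbl, hbm, hbs⟩ := ih (L - a) hL1 hL2
    refine ⟨u :: bs, by simp [hbl], ?_, ?_⟩
    · intro v hv
      rcases List.mem_cons.mp hv with rfl | hv
      · exact hu
      · exact hbm v hv
    · simp only [List.map_cons, List.sum_cons, hbs, hul]
      have : a ≤ L := by
        have : (t+1) * s = t * s + s := by ring
        omega
      omega

lemma two_le_sum_map_length {l : List (List Bool)} {a b : List Bool}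
    (ha : a ∈ l) (hb : b ∈ l) (hab : a ≠ b) :
    a.length + b.length ≤ (l.map List.length).sum := by
  obtain ⟨l1, l2, rfl⟩ := List.append_of_mem ha
  have hb' : b ∈ l1 ∨ b ∈ l2 := by
    rcases List.mem_append.mp hb with h | h
    · exact Or.inl h
    · rcases List.mem_cons.mp h with h | h
      · exact absurd h.symm hab
      · exact Or.inr h
  rw [List.map_append, List.sum_append, List.map_cons, List.sum_cons]
  rcases hb' with h | h
  · have : b.length ≤ (l1.map List.length).sum :=
      List.single_le_sum (fun x _ => Nat.zero_le x) _ (List.mem_map_of_mem h)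
    omega
  · have : b.length ≤ (l2.map List.length).sum :=
      List.single_le_sum (fun x _ => Nat.zero_le x) _ (List.mem_map_of_mem h)
    omega

def GoodFam (W : Finset (List Bool)) : Prop :=
  W.Nonempty ∧
  (∀ L, minLen W ≤ L → L ≤ maxLen W → ∃ u ∈ W, u.length = L) ∧
  1 ≤ minLen W ∧ 3 * minLen W + 1 ≤ 2 * maxLen W ∧ maxLen W ≤ 2 * minLen W

lemma goodFam_base : GoodFam ({[false], [true, true]} : Finset (List Bool)) ∧
    minLen ({[false], [true, true]} : Finset (List Bool)) = 1 ∧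
    maxLen ({[false], [true, true]} : Finset (List Bool)) = 2 := by
  set B1 : Finset (List Bool) := {[false], [true, true]} with hB1
  have hmem1 : [false] ∈ B1 := by simp [hB1]
  have hmem2 : [true, true] ∈ B1 := by simp [hB1]
  have hchar : ∀ u ∈ B1, u = [false] ∨ u = [true, true] := by
    intro u hu; simpa [hB1] using hu
  have hne : B1.Nonempty := ⟨_, hmem1⟩
  have hminle : minLen B1 ≤ 1 := by simpa using minLen_le hmem1
  have hminge : 1 ≤ minLen B1 := by
    obtain ⟨u, hu, hl⟩ := exists_mem_minLen hne
    rcases hchar u hu with rfl | rfl <;> simp at hl <;> omega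
  have hmin : minLen B1 = 1 := by omega
  have hmaxge : 2 ≤ maxLen B1 := by simpa using le_maxLen hmem2
  have hmaxle : maxLen B1 ≤ 2 := by
    obtain ⟨u, hu, hl⟩ := exists_mem_maxLen hne
    rcases hchar u hu with rfl | rfl <;> simp at hl <;> omega
  have hmax : maxLen B1 = 2 := by omega
  refine ⟨⟨hne, ?_, by omega, by omega, by omega⟩, hmin, hmax⟩
  intro L h1 h2
  rw [hmin] at h1
  rw [hmax] at h2
  interval_cases L
  · exact ⟨[false], hmem1, rfl⟩
  · exact ⟨[true, true], hmem2, rfl⟩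

lemma goodFam_step {W B₂ : Finset (List Bool)} {τ : List Bool} {t : ℕ}
    (hW : GoodFam W)
    (hτ : ∃ l : List (List Bool), l.Perm W.toList ∧ τ = l.flatten)
    (hrec : (B₂ : Set (List Bool)) =
      {w | ∃ bs : List (List Bool), bs.length = t ∧ (∀ b ∈ bs, b ∈ W) ∧
        w = bs.flatten ++ τ})
    (hτt : τ.length + 3 * (t * minLen W) + 1 ≤ 2 * (t * maxLen W)) :
    GoodFam B₂ ∧ minLen B₂ = t * minLen W + τ.length ∧
      maxLen B₂ = t * maxLen W + τ.length ∧ 3 ≤ t ∧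
      (∀ bs : List (List Bool), bs.length = t → (∀ u ∈ bs, u ∈ W) →
        bs.flatten ++ τ ∈ B₂) := by
  obtain ⟨hWne, hWfull, hs1, h23, hl2s⟩ := hW
  set s := minLen W with hs
  set ℓ := maxLen W with hℓ
  have hsl : s < ℓ := by omega
  have hchar : ∀ w : List Bool, w ∈ B₂ ↔ ∃ bs : List (List Bool), bs.length = t ∧
      (∀ b ∈ bs, b ∈ W) ∧ w = bs.flatten ++ τ := by
    intro w
    rw [← Finset.mem_coe, hrec]
    rfl
  -- tau length bounds
  have hτlen : τ.length = ((W.toList.map List.length).sum) := by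
    obtain ⟨l, hperm, rfl⟩ := hτ
    rw [List.length_flatten]
    exact List.Perm.sum_eq (hperm.map List.length)
  have hτge : s + ℓ ≤ τ.length := by
    obtain ⟨us, hus, husl⟩ := exists_mem_minLen hWne
    obtain ⟨ul, hul, hull⟩ := exists_mem_maxLen hWne
    have hne' : us ≠ ul := by
      intro h
      rw [h, hull] at husl
      omega
    have h1 : us ∈ W.toList := Finset.mem_toList.mpr hus
    have h2 : ul ∈ W.toList := Finset.mem_toList.mpr hul
    have := two_le_sum_map_length h1 h2 hne'
    rw [hτlen]
    omega
  have hτ2s : 2 * s + 1 ≤ τ.length := by omega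
  -- t ≥ 3
  have hts_big : τ.length + 1 ≤ t * s := by
    have h1 : t * ℓ ≤ t * (2 * s) := Nat.mul_le_mul_left _ hl2s
    have h2 : t * (2 * s) = 2 * (t * s) := by ring
    omega
  have ht3 : 3 ≤ t := by
    by_contra hcon
    push_neg at hcon
    have : t ≤ 2 := by omega
    have : t * s ≤ 2 * s := Nat.mul_le_mul_right _ this
    omega
  -- membership lengths
  have hmemlen : ∀ w ∈ B₂, t * s + τ.length ≤ w.length ∧ w.length ≤ t * ℓ + τ.length := by
    intro w hw
    obtain ⟨bs, hbl, hbm, rfl⟩ := (hchar w).mp hw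
    have hbounds := sum_map_length_bounds bs
      (fun u hu => ⟨minLen_le (hbm u hu), le_maxLen (hbm u hu)⟩)
    simp only [← hs, ← hℓ] at hbounds
    rw [List.length_append, List.length_flatten, hbl] at *
    constructor <;> omega
  have hmkmem : ∀ L, t * s + τ.length ≤ L → L ≤ t * ℓ + τ.length →
      ∃ w ∈ B₂, w.length = L := by
    intro L h1 h2
    obtain ⟨bs, hbl, hbm, hbs⟩ := exists_list_of_sum hWfull (le_of_lt hsl) t (L - τ.length)
      (by omega) (by omega)
    refine ⟨bs.flatten ++ τ, (hchar _).mpr ⟨bs, hbl, hbm, rfl⟩, ?_⟩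
    rw [List.length_append, List.length_flatten, hbs]
    omega
  have htl : t * s ≤ t * ℓ := Nat.mul_le_mul_left _ (le_of_lt hsl)
  have hne₂ : B₂.Nonempty := by
    obtain ⟨w, hw, _⟩ := hmkmem (t * s + τ.length) le_rfl (by omega)
    exact ⟨w, hw⟩
  have hmin₂ : minLen B₂ = t * s + τ.length := by
    apply le_antisymm
    · obtain ⟨w, hw, hwl⟩ := hmkmem (t * s + τ.length) le_rfl (by omega)
      rw [← hwl]
      exact minLen_le hw
    · obtain ⟨w, hw, hwl⟩ := exists_mem_minLen hne₂
      rw [← hwl]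
      exact (hmemlen w hw).1
  have hmax₂ : maxLen B₂ = t * ℓ + τ.length := by
    apply le_antisymm
    · obtain ⟨w, hw, hwl⟩ := exists_mem_maxLen hne₂
      rw [← hwl]
      exact (hmemlen w hw).2
    · obtain ⟨w, hw, hwl⟩ := hmkmem (t * ℓ + τ.length) (by omega) le_rfl
      rw [← hwl]
      exact le_maxLen hw
  refine ⟨⟨hne₂, ?_, ?_, ?_, ?_⟩, hmin₂, hmax₂, ht3, ?_⟩
  · intro L h1 h2
    rw [hmin₂] at h1
    rw [hmax₂] at h2
    exact hmkmem L h1 h2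
  · rw [hmin₂]; omega
  · rw [hmin₂, hmax₂]
    have h1 : 2 * (t * ℓ) = t * ℓ + t * ℓ := by ring
    omega
  · rw [hmin₂, hmax₂]
    have h1 : t * ℓ ≤ t * (2 * s) := Nat.mul_le_mul_left _ hl2s
    have h2 : t * (2 * s) = 2 * (t * s) := by ring
    omega
  · intro bs hbl hbm
    exact (hchar _).mpr ⟨bs, hbl, hbm, rfl⟩


/-- under the growth conditions on `t(n)`, the coded shifts `X_n` form a
`d̄^H`-Cauchy sequence with total variation less than `ε`. -/
theorem statement17 (B : ℕ → Finset (List Bool)) (t : ℕ → ℕ) (τ : ℕ → List Bool)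
    (hB1 : B 1 = {[false], [true, true]})
    (ht2 : ∀ n : ℕ, 1 ≤ n → 2 ≤ t n)
    (hτ : ∀ n : ℕ, 1 ≤ n → ∃ l : List (List Bool), l.Perm (B n).toList ∧ τ n = l.flatten)
    (hrec : ∀ n : ℕ, 1 ≤ n → (B (n + 1) : Set (List Bool)) =
      {w | ∃ bs : List (List Bool), bs.length = t n ∧ (∀ b ∈ bs, b ∈ B n) ∧
        w = bs.flatten ++ τ n})
    (ε : ℝ) (hε : 0 < ε)
    (ht3 : ∀ n : ℕ, 1 ≤ n →
      (((τ n).length : ℝ) / (2 * (maxLen (B n) : ℝ) - 3 * (minLen (B n) : ℝ)) < (t n : ℝ)))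
    (ht4 : ∀ n : ℕ, 1 ≤ n →
      ((2 : ℝ) ^ n * (((τ n).length : ℝ) + 3 * (maxLen (B n) : ℝ)) /
        ((minLen (B n) : ℝ) * ε) < (t n : ℝ))) :
    Summable (fun n : ℕ =>
      hausdist dbar (codedShift (B (n + 1))) (codedShift (B (n + 2)))) ∧
    ∑' n : ℕ, hausdist dbar (codedShift (B (n + 1))) (codedShift (B (n + 2))) < ε := by
  classical
  -- the nat version of hypothesis ht3
  have hτt : ∀ n, 1 ≤ n → GoodFam (B n) →
      (τ n).length + 3 * (t n * minLen (B n)) + 1 ≤ 2 * (t n * maxLen (B n)) := by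
    intro n hn hG
    obtain ⟨-, -, hs1, h23, -⟩ := hG
    have h23R : 3 * (minLen (B n) : ℝ) + 1 ≤ 2 * (maxLen (B n) : ℝ) := by
      exact_mod_cast h23
    have hd : (0:ℝ) < 2 * (maxLen (B n) : ℝ) - 3 * (minLen (B n) : ℝ) := by linarith
    have h3 := (div_lt_iff₀ hd).mp (ht3 n hn)
    have hR : ((τ n).length : ℝ) + 3 * ((t n : ℝ) * (minLen (B n) : ℝ)) <
        2 * ((t n : ℝ) * (maxLen (B n) : ℝ)) := by nlinarith
    have hnat : (τ n).length + 3 * (t n * minLen (B n)) < 2 * (t n * maxLen (B n)) := by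
      exact_mod_cast hR
    omega
  -- the invariant
  have hGood : ∀ n, 1 ≤ n → GoodFam (B n) := by
    intro n hn
    induction n, hn using Nat.le_induction with
    | base => rw [hB1]; exact goodFam_base.1
    | succ n hn ih =>
      exact (goodFam_step ih (hτ n hn) (hrec n hn) (hτt n hn ih)).1
  -- per-step Hausdorff bound
  have hstep : ∀ n, 1 ≤ n →
      hausdist dbar (codedShift (B n)) (codedShift (B (n + 1))) ≤
        (((τ n).length : ℝ) + 3 * (maxLen (B n))) / ((t n : ℝ) * (minLen (B n))) := by
    intro n hn
    have hG := hGood n hn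
    obtain ⟨hGstep, -, -, ht3n, hB2⟩ := goodFam_step hG (hτ n hn) (hrec n hn) (hτt n hn hG)
    obtain ⟨hne, hfull, hs1, h23, hl2s⟩ := hG
    have hWlen : ∀ u ∈ B n, minLen (B n) ≤ u.length ∧ u.length ≤ maxLen (B n) :=
      fun u hu => ⟨minLen_le hu, le_maxLen hu⟩
    have hδ0 : 0 ≤ (((τ n).length : ℝ) + 3 * (maxLen (B n))) / ((t n : ℝ) * (minLen (B n))) := by
      positivity
    apply hausdist_dbar_le hδ0
    · exact step_approx hfull hWlen hs1 h23 ht3n hB2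
    · -- X_{n+1} ⊆ X_n
      apply codedShift_subset_of_decomp
      · intro w hw
        have hchar : w ∈ (B (n+1) : Set (List Bool)) := hw
        rw [hrec n hn] at hchar
        obtain ⟨bs, hbl, hbm, rfl⟩ := hchar
        obtain ⟨l, hperm, hτeq⟩ := hτ n hn
        refine ⟨bs ++ l, ?_, ?_, ?_⟩
        · intro hnil
          have : bs = [] := by
            rcases List.append_eq_nil_iff.mp hnil with ⟨h1, _⟩
            exact h1
          rw [this] at hbl
          simp at hbl
          omega
        · intro u hu
          rcases List.mem_append.mp hu with h | h
          · exact hbm u h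
          · exact Finset.mem_toList.mp (hperm.mem_iff.mp h)
        · rw [List.flatten_append, hτeq]
      · intro u hu
        have := minLen_le hu
        exact List.ne_nil_of_length_pos (by omega)
  -- comparison with the geometric series
  set g : ℕ → ℝ := fun n => hausdist dbar (codedShift (B (n + 1))) (codedShift (B (n + 2)))
    with hgdef
  have hg0 : ∀ n, 0 ≤ g n := fun n => hausdist_dbar_nonneg _ _
  set f : ℕ → ℝ := fun n => (ε / 2) * (1 / 2) ^ n with hfdef
  have hglt : ∀ n, g n < f n := by
    intro n
    have h1 := hstep (n + 1) (by omega)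
    have hG := hGood (n + 1) (by omega)
    have hs1 := hG.2.2.1
    have hGstep := goodFam_step hG (hτ (n+1) (by omega)) (hrec (n+1) (by omega))
      (hτt (n+1) (by omega) hG)
    have ht3n : 3 ≤ t (n + 1) := hGstep.2.2.2.1
    -- from ht4 : δ < ε / 2^(n+1)
    have h4 := ht4 (n + 1) (by omega)
    set m := n + 1
    set sR : ℝ := (minLen (B m) : ℝ) with hsRdef
    set ℓR : ℝ := (maxLen (B m) : ℝ) with hlRdef
    set τR : ℝ := ((τ m).length : ℝ) with hτRdef
    set tR : ℝ := (t m : ℝ) with htRdef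
    have hs0 : (0:ℝ) < sR := by
      simp only [hsRdef]
      exact_mod_cast hs1
    have ht0 : (0:ℝ) < tR := by
      simp only [htRdef]
      have : (0:ℕ) < t m := by omega
      exact_mod_cast this
    have hτ0 : (0:ℝ) ≤ τR := by simp only [hτRdef]; positivity
    have hℓ0 : (0:ℝ) ≤ ℓR := by simp only [hlRdef]; positivity
    have h2m : (0:ℝ) < (2:ℝ) ^ m := by positivity
    have h4' : (2:ℝ) ^ m * (τR + 3 * ℓR) < tR * (sR * ε) :=
      (div_lt_iff₀ (by positivity)).mp h4
    have hδlt : (τR + 3 * ℓR) / (tR * sR) < ε / 2 ^ m := by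
      rw [div_lt_div_iff₀ (by positivity) h2m]
      nlinarith
    calc g n ≤ (τR + 3 * ℓR) / (tR * sR) := h1
      _ < ε / 2 ^ m := hδlt
      _ = f n := by
          have hm : m = n + 1 := rfl
          simp only [hfdef, hm]
          rw [div_pow, one_pow, div_mul_div_comm, mul_one, ← pow_succ']
  have hfsum : Summable f := (summable_geometric_two).mul_left (ε / 2)
  have hgsum : Summable g :=
    Summable.of_nonneg_of_le hg0 (fun n => le_of_lt (hglt n)) hfsum
  refine ⟨hgsum, ?_⟩
  have htsumf : ∑' n, f n = ε := by
    rw [hfdef]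
    rw [tsum_mul_left, tsum_geometric_two]
    ring
  calc ∑' n, g n < ∑' n, f n :=
        Summable.tsum_lt_tsum (fun n => le_of_lt (hglt n)) (hglt 0) hgsum hfsum
    _ = ε := htsumf


end DbarPaper
end
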